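/- Every 2-partite digraph that is not bipartite and is homogeneous is isomorphic to one of: M_κ for some cardinal κ ≥ 2; a generic 2-partite digraph; or a generic orientation of a generic bipartite graph. -/

import Mathlib

/-- A 2-partite digraph `D = (X, Y, E)`: `X` and `Y` are disjoint sets covering the
vertex set, every edge goes between the two sides, and no two opposite edges exist. -/
structure TwoPartiteDigraph (V : Type*) where
  X : Set V
  Y : Set V
  cover : X ∪ Y = Set.univ
  disj : Disjoint X Y
  E : V → V → Prop
  mem_of_edge : ∀ u v, E u v → (u ∈ X ∧ v ∈ Y) ∨ (u ∈ Y ∧ v ∈ X)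
  not_opposite : ∀ u v, E u v → ¬ E v u

namespace TwoPartiteDigraph

variable {V V₁ V₂ : Type*}

/-- Out-neighbourhood (successors). -/
def Nplus (D : TwoPartiteDigraph V) (v : V) : Set V := {w | D.E v w}

/-- In-neighbourhood (predecessors). -/
def Nminus (D : TwoPartiteDigraph V) (v : V) : Set V := {w | D.E w v}

/-- Adjacency in the underlying undirected bipartite graph. -/
def Adj (D : TwoPartiteDigraph V) (u v : V) : Prop := D.E u v ∨ D.E v u

/-- `v^⊥`: the vertices on the other side not adjacent to `v`. -/
def perp (D : TwoPartiteDigraph V) (v : V) : Set V :=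
  {w | ((v ∈ D.X ∧ w ∈ D.Y) ∨ (v ∈ D.Y ∧ w ∈ D.X)) ∧ ¬ D.Adj v w}

/-- `D` is bipartite if all edges go from `X` to `Y`, or all from `Y` to `X`. -/
def Bipartite (D : TwoPartiteDigraph V) : Prop :=
  (∀ u v, D.E u v → u ∈ D.X) ∨ (∀ u v, D.E u v → u ∈ D.Y)

/-- `φ` is an isomorphism between the subdigraphs induced on `A` and on `φ '' A`,
respecting the bipartition. -/
def IsPartialIso (D : TwoPartiteDigraph V) (A : Set V) (φ : V → V) : Prop :=
  Set.InjOn φ A ∧ (∀ a ∈ A, (a ∈ D.X ↔ φ a ∈ D.X)) ∧ (∀ a ∈ A, (a ∈ D.Y ↔ φ a ∈ D.Y)) ∧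
  ∀ a ∈ A, ∀ b ∈ A, (D.E a b ↔ D.E (φ a) (φ b))

/-- A bipartition-preserving automorphism of `D`. -/
def IsAuto (D : TwoPartiteDigraph V) (α : Equiv.Perm V) : Prop :=
  (∀ v, v ∈ D.X ↔ α v ∈ D.X) ∧ (∀ v, v ∈ D.Y ↔ α v ∈ D.Y) ∧
  ∀ u v, D.E u v ↔ D.E (α u) (α v)

/-- `D` is homogeneous: every isomorphism between finite induced subdigraphs respecting
the bipartition extends to a bipartition-preserving automorphism of `D`. -/
def Homogeneous (D : TwoPartiteDigraph V) : Prop :=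
  ∀ A : Set V, A.Finite → ∀ φ : V → V, D.IsPartialIso A φ →
    ∃ α : Equiv.Perm V, D.IsAuto α ∧ ∀ a ∈ A, α a = φ a

/-- The underlying undirected bipartite graph is complete bipartite. -/
def CompleteBip (D : TwoPartiteDigraph V) : Prop := ∀ x ∈ D.X, ∀ y ∈ D.Y, D.Adj x y

/-- `D` is a generic 2-partite digraph. -/
def IsGeneric (D : TwoPartiteDigraph V) : Prop :=
  D.CompleteBip ∧
  ∀ AX BX : Set V, AX.Finite → BX.Finite → AX ⊆ D.X → BX ⊆ D.X → Disjoint AX BX →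
  ∀ AY BY : Set V, AY.Finite → BY.Finite → AY ⊆ D.Y → BY ⊆ D.Y → Disjoint AY BY →
    (∃ y ∈ D.Y, AX ⊆ D.Nplus y ∧ BX ⊆ D.Nminus y) ∧
    (∃ x ∈ D.X, AY ⊆ D.Nplus x ∧ BY ⊆ D.Nminus x)

/-- `D` is a generic orientation of a generic bipartite graph. -/
def IsGenericOrientation (D : TwoPartiteDigraph V) : Prop :=
  ∀ AX BX CX : Set V, AX.Finite → BX.Finite → CX.Finite →
    AX ⊆ D.X → BX ⊆ D.X → CX ⊆ D.X →
    Disjoint AX BX → Disjoint AX CX → Disjoint BX CX →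
  ∀ AY BY CY : Set V, AY.Finite → BY.Finite → CY.Finite →
    AY ⊆ D.Y → BY ⊆ D.Y → CY ⊆ D.Y →
    Disjoint AY BY → Disjoint AY CY → Disjoint BY CY →
    (∃ y ∈ D.Y, AX ⊆ D.Nplus y ∧ BX ⊆ D.Nminus y ∧ CX ⊆ D.perp y) ∧
    (∃ x ∈ D.X, AY ⊆ D.Nplus x ∧ BY ⊆ D.Nminus x ∧ CY ⊆ D.perp x)

/-- `D` is (a copy of) `M_κ` with the matching oriented from `X` to `Y`:
there is a bijection `m : X → Y` such that the edges from `X` to `Y` form the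
perfect matching `{(x, m x)}` and the edges from `Y` to `X` form its bipartite
complement. -/
def IsMFixed (D : TwoPartiteDigraph V) : Prop :=
  ∃ m : V → V, Set.BijOn m D.X D.Y ∧
    (∀ x ∈ D.X, ∀ y ∈ D.Y, (D.E x y ↔ y = m x)) ∧
    (∀ x ∈ D.X, ∀ y ∈ D.Y, (D.E y x ↔ y ≠ m x))

/-- `D` is (a copy of) `M_κ`: one of the two directed parts is a perfect matching and
the other is the bipartite complement of a perfect matching. -/
def IsM (D : TwoPartiteDigraph V) : Prop :=
  ∃ m : V → V, Set.BijOn m D.X D.Y ∧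
    ((∀ x ∈ D.X, ∀ y ∈ D.Y, (D.E x y ↔ y = m x) ∧ (D.E y x ↔ y ≠ m x)) ∨
     (∀ x ∈ D.X, ∀ y ∈ D.Y, (D.E y x ↔ y = m x) ∧ (D.E x y ↔ y ≠ m x)))

/-- Isomorphism of 2-partite digraphs respecting the bipartitions. -/
def Isomorphic (D₁ : TwoPartiteDigraph V₁) (D₂ : TwoPartiteDigraph V₂) : Prop :=
  ∃ e : V₁ ≃ V₂, (∀ v, v ∈ D₁.X ↔ e v ∈ D₂.X) ∧ (∀ v, v ∈ D₁.Y ↔ e v ∈ D₂.Y) ∧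
    ∀ u v, D₁.E u v ↔ D₂.E (e u) (e v)

/-- `φ` is an isomorphism of finite induced subgraphs of the underlying undirected
bipartite graph, respecting the bipartition. -/
def IsGraphPartialIso (D : TwoPartiteDigraph V) (A : Set V) (φ : V → V) : Prop :=
  Set.InjOn φ A ∧ (∀ a ∈ A, (a ∈ D.X ↔ φ a ∈ D.X)) ∧ (∀ a ∈ A, (a ∈ D.Y ↔ φ a ∈ D.Y)) ∧
  ∀ a ∈ A, ∀ b ∈ A, (D.Adj a b ↔ D.Adj (φ a) (φ b))

/-- The underlying undirected bipartite graph of `D` is homogeneous. -/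
def GraphHomogeneous (D : TwoPartiteDigraph V) : Prop :=
  ∀ A : Set V, A.Finite → ∀ φ : V → V, D.IsGraphPartialIso A φ →
    ∃ α : Equiv.Perm V, ((∀ v, v ∈ D.X ↔ α v ∈ D.X) ∧ (∀ v, v ∈ D.Y ↔ α v ∈ D.Y) ∧
      ∀ u v, D.Adj u v ↔ D.Adj (α u) (α v)) ∧ ∀ a ∈ A, α a = φ a

/-- The underlying undirected bipartite graph of `D` is generic. -/
def UnderlyingGeneric (D : TwoPartiteDigraph V) : Prop :=
  ∀ UX VX : Set V, UX.Finite → VX.Finite → UX ⊆ D.X → VX ⊆ D.X → Disjoint UX VX →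
  ∀ UY VY : Set V, UY.Finite → VY.Finite → UY ⊆ D.Y → VY ⊆ D.Y → Disjoint UY VY →
    (∃ y ∈ D.Y, (∀ u ∈ UX, D.Adj y u) ∧ ∀ v ∈ VX, ¬ D.Adj y v) ∧
    (∃ x ∈ D.X, (∀ u ∈ UY, D.Adj x u) ∧ ∀ v ∈ VY, ¬ D.Adj x v)

end TwoPartiteDigraph

open TwoPartiteDigraph

namespace TwoPartiteDigraph

section Aux
variable {V : Type*}

lemma mem_or (D : TwoPartiteDigraph V) (v : V) : v ∈ D.X ∨ v ∈ D.Y := by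
  have h : v ∈ D.X ∪ D.Y := D.cover ▸ Set.mem_univ v
  exact h

lemma notY (D : TwoPartiteDigraph V) {v : V} (h : v ∈ D.X) : v ∉ D.Y :=
  fun h' => Set.disjoint_left.mp D.disj h h'

lemma notX (D : TwoPartiteDigraph V) {v : V} (h : v ∈ D.Y) : v ∉ D.X :=
  fun h' => Set.disjoint_left.mp D.disj h' h

lemma noEdgeXX (D : TwoPartiteDigraph V) {u v : V} (hu : u ∈ D.X) (hv : v ∈ D.X) :
    ¬ D.E u v := by
  intro h
  rcases D.mem_of_edge u v h with ⟨_, h2⟩ | ⟨h1, _⟩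
  · exact D.notY hv h2
  · exact D.notY hu h1

lemma noEdgeYY (D : TwoPartiteDigraph V) {u v : V} (hu : u ∈ D.Y) (hv : v ∈ D.Y) :
    ¬ D.E u v := by
  intro h
  rcases D.mem_of_edge u v h with ⟨h1, _⟩ | ⟨_, h2⟩
  · exact D.notX hu h1
  · exact D.notX hv h2

lemma memX_of_edge_from (D : TwoPartiteDigraph V) {y x : V} (hy : y ∈ D.Y) (h : D.E y x) :
    x ∈ D.X := by
  rcases D.mem_of_edge y x h with ⟨h1, _⟩ | ⟨_, h2⟩
  · exact absurd h1 (D.notX hy)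
  · exact h2

lemma memX_of_edge_to (D : TwoPartiteDigraph V) {y x : V} (hy : y ∈ D.Y) (h : D.E x y) :
    x ∈ D.X := by
  rcases D.mem_of_edge x y h with ⟨h1, _⟩ | ⟨h1, h2⟩
  · exact h1
  · exact absurd h2 (D.notX hy)

lemma memY_of_edge_from (D : TwoPartiteDigraph V) {x y : V} (hx : x ∈ D.X) (h : D.E x y) :
    y ∈ D.Y := by
  rcases D.mem_of_edge x y h with ⟨_, h2⟩ | ⟨h1, _⟩
  · exact h2
  · exact absurd h1 (D.notY hx)

lemma memY_of_edge_to (D : TwoPartiteDigraph V) {x y : V} (hx : x ∈ D.X) (h : D.E y x) :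
    y ∈ D.Y := by
  rcases D.mem_of_edge y x h with ⟨_, h2⟩ | ⟨h1, _⟩
  · exact absurd h2 (D.notY hx)
  · exact h1

lemma adj_comm (D : TwoPartiteDigraph V) {u v : V} : D.Adj u v ↔ D.Adj v u :=
  Or.comm

lemma IsAuto.adj_iff {D : TwoPartiteDigraph V} {α : Equiv.Perm V} (hα : D.IsAuto α)
    (u v : V) : D.Adj u v ↔ D.Adj (α u) (α v) :=
  or_congr (hα.2.2 u v) (hα.2.2 v u)

/-- Extend an arbitrary injective self-map of a finite subset of `X` to an automorphism. -/
lemma extendX (D : TwoPartiteDigraph V) (hhom : D.Homogeneous) {S : Set V} (hS : S.Finite)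
    (hSX : S ⊆ D.X) (φ : V → V) (hinj : Set.InjOn φ S) (himg : ∀ a ∈ S, φ a ∈ D.X) :
    ∃ α : Equiv.Perm V, D.IsAuto α ∧ ∀ a ∈ S, α a = φ a := by
  apply hhom S hS φ
  refine ⟨hinj, ?_, ?_, ?_⟩
  · intro a ha; exact iff_of_true (hSX ha) (himg a ha)
  · intro a ha; exact iff_of_false (D.notY (hSX ha)) (D.notY (himg a ha))
  · intro a ha b hb
    exact iff_of_false (D.noEdgeXX (hSX ha) (hSX hb)) (D.noEdgeXX (himg a ha) (himg b hb))

lemma extendY (D : TwoPartiteDigraph V) (hhom : D.Homogeneous) {S : Set V} (hS : S.Finite)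
    (hSY : S ⊆ D.Y) (φ : V → V) (hinj : Set.InjOn φ S) (himg : ∀ a ∈ S, φ a ∈ D.Y) :
    ∃ α : Equiv.Perm V, D.IsAuto α ∧ ∀ a ∈ S, α a = φ a := by
  apply hhom S hS φ
  refine ⟨hinj, ?_, ?_, ?_⟩
  · intro a ha; exact iff_of_false (D.notX (hSY ha)) (D.notX (himg a ha))
  · intro a ha; exact iff_of_true (hSY ha) (himg a ha)
  · intro a ha b hb
    exact iff_of_false (D.noEdgeYY (hSY ha) (hSY hb)) (D.noEdgeYY (himg a ha) (himg b hb))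

lemma singleX (D : TwoPartiteDigraph V) (hhom : D.Homogeneous) {x x' : V} (hx : x ∈ D.X)
    (hx' : x' ∈ D.X) : ∃ α : Equiv.Perm V, D.IsAuto α ∧ α x = x' := by
  obtain ⟨α, hα, h⟩ := D.extendX hhom (Set.finite_singleton x) (by simpa using hx)
    (fun _ => x') (fun a ha b hb _ => by
      simp only [Set.mem_singleton_iff] at ha hb; rw [ha, hb]) (fun a _ => hx')
  exact ⟨α, hα, h x rfl⟩

lemma singleY (D : TwoPartiteDigraph V) (hhom : D.Homogeneous) {y y' : V} (hy : y ∈ D.Y)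
    (hy' : y' ∈ D.Y) : ∃ α : Equiv.Perm V, D.IsAuto α ∧ α y = y' := by
  obtain ⟨α, hα, h⟩ := D.extendY hhom (Set.finite_singleton y) (by simpa using hy)
    (fun _ => y') (fun a ha b hb _ => by
      simp only [Set.mem_singleton_iff] at ha hb; rw [ha, hb]) (fun a _ => hy')
  exact ⟨α, hα, h y rfl⟩

lemma pairX (D : TwoPartiteDigraph V) (hhom : D.Homogeneous) {x₁ x₂ x₃ : V} (h₁ : x₁ ∈ D.X)
    (h₂ : x₂ ∈ D.X) (h₃ : x₃ ∈ D.X) (h12 : x₁ ≠ x₂) (h13 : x₁ ≠ x₃) :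
    ∃ α : Equiv.Perm V, D.IsAuto α ∧ α x₁ = x₁ ∧ α x₂ = x₃ := by
  classical
  obtain ⟨α, hα, h⟩ := D.extendX hhom (S := {x₁, x₂}) (Set.toFinite _)
    (by rintro a (rfl | rfl) <;> assumption)
    (fun v => if v = x₂ then x₃ else v)
    (by
      rintro a (rfl | rfl) b (rfl | rfl) hab <;>
        simp only [if_neg h12, if_pos rfl] at hab <;> first | rfl | exact absurd hab h13 |
          exact absurd hab.symm h13)
    (by rintro a (rfl | rfl)
        · simpa [if_neg h12] using h₁
        · simpa using h₃)
  refine ⟨α, hα, ?_, ?_⟩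
  · have := h x₁ (by simp); simpa [if_neg h12] using this
  · have := h x₂ (by simp); simpa using this

lemma pairY (D : TwoPartiteDigraph V) (hhom : D.Homogeneous) {y₁ y₂ y₃ : V} (h₁ : y₁ ∈ D.Y)
    (h₂ : y₂ ∈ D.Y) (h₃ : y₃ ∈ D.Y) (h12 : y₁ ≠ y₂) (h13 : y₁ ≠ y₃) :
    ∃ α : Equiv.Perm V, D.IsAuto α ∧ α y₁ = y₁ ∧ α y₂ = y₃ := by
  classical
  obtain ⟨α, hα, h⟩ := D.extendY hhom (S := {y₁, y₂}) (Set.toFinite _)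
    (by rintro a (rfl | rfl) <;> assumption)
    (fun v => if v = y₂ then y₃ else v)
    (by
      rintro a (rfl | rfl) b (rfl | rfl) hab <;>
        simp only [if_neg h12, if_pos rfl] at hab <;> first | rfl | exact absurd hab h13 |
          exact absurd hab.symm h13)
    (by rintro a (rfl | rfl)
        · simpa [if_neg h12] using h₁
        · simpa using h₃)
  refine ⟨α, hα, ?_, ?_⟩
  · have := h y₁ (by simp); simpa [if_neg h12] using this
  · have := h y₂ (by simp); simpa using this

end Aux

section Aux2
variable {V : Type*}

/-- realization of a (+, -, ⊥) pattern over subsets of `X` by a vertex of `Y`. -/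
def Rzd (D : TwoPartiteDigraph V) (A B C : Set V) : Prop :=
  ∃ y ∈ D.Y, (∀ a ∈ A, D.E y a) ∧ (∀ b ∈ B, D.E b y) ∧ (∀ c ∈ C, ¬ D.Adj y c)

lemma exists_bijOn_of_ncard_eq {A A' : Set V} (hA : A.Finite) (hA' : A'.Finite)
    (h : A.ncard = A'.ncard) : ∃ f : V → V, Set.BijOn f A A' := by
  classical
  have hcard : hA.toFinset.card = hA'.toFinset.card := by
    rw [← Set.ncard_eq_toFinset_card A hA, ← Set.ncard_eq_toFinset_card A' hA']
    exact h
  have e : hA.toFinset ≃ hA'.toFinset := Finset.equivOfCardEq hcard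
  set f : V → V := fun v => if hv : v ∈ hA.toFinset then (e ⟨v, hv⟩ : V) else v with hfdef
  have hval : ∀ a (ha : a ∈ hA.toFinset), f a = (e ⟨a, ha⟩ : V) := fun a ha => dif_pos ha
  refine ⟨f, ?_, ?_, ?_⟩
  · intro a ha
    have ha' : a ∈ hA.toFinset := hA.mem_toFinset.mpr ha
    rw [hval a ha']
    exact hA'.mem_toFinset.mp (e ⟨a, ha'⟩).2
  · intro a ha b hb hab
    have ha' : a ∈ hA.toFinset := hA.mem_toFinset.mpr ha
    have hb' : b ∈ hA.toFinset := hA.mem_toFinset.mpr hb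
    rw [hval a ha', hval b hb'] at hab
    have := e.injective (Subtype.coe_injective hab)
    exact congrArg Subtype.val this
  · intro a' ha'
    have h1 : a' ∈ hA'.toFinset := hA'.mem_toFinset.mpr ha'
    refine ⟨(e.symm ⟨a', h1⟩ : V), hA.mem_toFinset.mp (e.symm ⟨a', h1⟩).2, ?_⟩
    have hm : ((e.symm ⟨a', h1⟩ : V)) ∈ hA.toFinset := (e.symm ⟨a', h1⟩).2
    rw [hval _ hm]
    simp

/-- Transfer principle: realization of a pattern only depends on the sizes of its parts. -/
lemma transfer (D : TwoPartiteDigraph V) (hhom : D.Homogeneous) {A B C A' B' C' : Set V}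
    (hA : A.Finite) (hB : B.Finite) (hC : C.Finite)
    (hA' : A'.Finite) (hB' : B'.Finite) (hC' : C'.Finite)
    (hAX : A ⊆ D.X) (hBX : B ⊆ D.X) (hCX : C ⊆ D.X)
    (hAX' : A' ⊆ D.X) (hBX' : B' ⊆ D.X) (hCX' : C' ⊆ D.X)
    (hAB : Disjoint A B) (hAC : Disjoint A C) (hBC : Disjoint B C)
    (hAB' : Disjoint A' B') (hAC' : Disjoint A' C') (hBC' : Disjoint B' C')
    (hcA : A.ncard = A'.ncard) (hcB : B.ncard = B'.ncard) (hcC : C.ncard = C'.ncard)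
    (h : D.Rzd A B C) : D.Rzd A' B' C' := by
  classical
  obtain ⟨f, hf⟩ := exists_bijOn_of_ncard_eq hA hA' hcA
  obtain ⟨g, hg⟩ := exists_bijOn_of_ncard_eq hB hB' hcB
  obtain ⟨k, hk⟩ := exists_bijOn_of_ncard_eq hC hC' hcC
  set φ : V → V := fun v => if v ∈ A then f v else if v ∈ B then g v else if v ∈ C then k v else v
    with hφ
  have hφA : ∀ a ∈ A, φ a = f a := fun a ha => by simp [hφ, ha]
  have hφB : ∀ b ∈ B, φ b = g b := fun b hb => by
    have : b ∉ A := fun h' => Set.disjoint_left.mp hAB h' hb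
    simp [hφ, this, hb]
  have hφC : ∀ c ∈ C, φ c = k c := fun c hc => by
    have h1 : c ∉ A := fun h' => Set.disjoint_left.mp hAC h' hc
    have h2 : c ∉ B := fun h' => Set.disjoint_left.mp hBC h' hc
    simp [hφ, h1, h2, hc]
  set S : Set V := A ∪ B ∪ C with hSdef
  have hmem : ∀ v ∈ S, (v ∈ A ∧ φ v ∈ A') ∨ (v ∈ B ∧ φ v ∈ B') ∨ (v ∈ C ∧ φ v ∈ C') := by
    rintro v ((hv | hv) | hv)
    · exact Or.inl ⟨hv, (hφA v hv) ▸ hf.1 hv⟩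
    · exact Or.inr (Or.inl ⟨hv, (hφB v hv) ▸ hg.1 hv⟩)
    · exact Or.inr (Or.inr ⟨hv, (hφC v hv) ▸ hk.1 hv⟩)
  have hSfin : S.Finite := (hA.union hB).union hC
  have hSX : S ⊆ D.X := by
    rintro v ((hv | hv) | hv)
    · exact hAX hv
    · exact hBX hv
    · exact hCX hv
  have hinj : Set.InjOn φ S := by
    intro u hu v hv huv
    rcases hmem u hu with ⟨hu1, hu2⟩ | ⟨hu1, hu2⟩ | ⟨hu1, hu2⟩ <;>
      rcases hmem v hv with ⟨hv1, hv2⟩ | ⟨hv1, hv2⟩ | ⟨hv1, hv2⟩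
    · exact hf.2.1 hu1 hv1 (by rwa [← hφA u hu1, ← hφA v hv1])
    · exact absurd hv2 (fun h' => Set.disjoint_left.mp hAB' (huv ▸ hu2) h')
    · exact absurd hv2 (fun h' => Set.disjoint_left.mp hAC' (huv ▸ hu2) h')
    · exact absurd hv2 (fun h' => Set.disjoint_right.mp hAB' (huv ▸ hu2) h')
    · exact hg.2.1 hu1 hv1 (by rwa [← hφB u hu1, ← hφB v hv1])
    · exact absurd hv2 (fun h' => Set.disjoint_left.mp hBC' (huv ▸ hu2) h')
    · exact absurd hv2 (fun h' => Set.disjoint_right.mp hAC' (huv ▸ hu2) h')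
    · exact absurd hv2 (fun h' => Set.disjoint_right.mp hBC' (huv ▸ hu2) h')
    · exact hk.2.1 hu1 hv1 (by rwa [← hφC u hu1, ← hφC v hv1])
  have himg : ∀ v ∈ S, φ v ∈ D.X := by
    intro v hv
    rcases hmem v hv with ⟨_, h2⟩ | ⟨_, h2⟩ | ⟨_, h2⟩
    · exact hAX' h2
    · exact hBX' h2
    · exact hCX' h2
  obtain ⟨α, hα, hext⟩ := D.extendX hhom hSfin hSX φ hinj himg
  obtain ⟨y, hy, hplus, hminus, hperp⟩ := h
  refine ⟨α y, (hα.2.1 y).mp hy, ?_, ?_, ?_⟩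
  · intro a' ha'
    obtain ⟨a, ha, rfl⟩ := hf.2.2 ha'
    have : D.E (α y) (α a) := (hα.2.2 y a).mp (hplus a ha)
    rwa [hext a (Or.inl (Or.inl ha)), hφA a ha] at this
  · intro b' hb'
    obtain ⟨b, hb, rfl⟩ := hg.2.2 hb'
    have : D.E (α b) (α y) := (hα.2.2 b y).mp (hminus b hb)
    rwa [hext b (Or.inl (Or.inr hb)), hφB b hb] at this
  · intro c' hc'
    obtain ⟨c, hc, rfl⟩ := hk.2.2 hc'
    have : ¬ D.Adj (α y) (α c) := fun h' => hperp c hc ((hα.adj_iff y c).mpr h')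
    rwa [hext c (Or.inr hc), hφC c hc] at this

/-- Two vertices of `Y` whose `R`-sets are bounded by / contain sets of mismatched size
give a contradiction. -/
lemma Rset_clash (D : TwoPartiteDigraph V) (hhom : D.Homogeneous) (R : V → V → Prop)
    (hR : ∀ (α : Equiv.Perm V), D.IsAuto α → ∀ v w, R v w ↔ R (α v) (α w))
    {y₁ y₂ : V} (hy₁ : y₁ ∈ D.Y) (hy₂ : y₂ ∈ D.Y)
    {S₁ S₂ : Set V} (hS₁ : S₁.Finite)
    (h₁ : {x | R y₁ x} ⊆ S₁) (h₂ : S₂ ⊆ {x | R y₂ x})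
    (hc : S₁.ncard < S₂.ncard) : False := by
  obtain ⟨α, hα, hα₁⟩ := D.singleY hhom hy₁ hy₂
  have himg : {x | R y₂ x} = α '' {x | R y₁ x} := by
    ext z
    constructor
    · intro hz
      refine ⟨α.symm z, ?_, by simp⟩
      have : R (α y₁) (α (α.symm z)) ↔ R y₁ (α.symm z) := (hR α hα y₁ (α.symm z)).symm
      rw [hα₁] at this
      simp only [Equiv.apply_symm_apply] at this
      exact this.mp hz
    · rintro ⟨w, hw, rfl⟩
      rw [← hα₁]
      exact (hR α hα y₁ w).mp hw
  have hfin1 : {x | R y₁ x}.Finite := hS₁.subset h₁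
  have hfin2 : {x | R y₂ x}.Finite := by rw [himg]; exact hfin1.image α
  have c1 : S₂.ncard ≤ {x | R y₂ x}.ncard := Set.ncard_le_ncard h₂ hfin2
  have c2 : {x | R y₂ x}.ncard = {x | R y₁ x}.ncard := by
    rw [himg, Set.ncard_image_of_injective _ α.injective]
  have c3 : {x | R y₁ x}.ncard ≤ S₁.ncard := Set.ncard_le_ncard h₁ hS₁
  omega

/-- If three vertices of `Y` have exact `R`-sets `T₁, T₂, T₃`, with `y₁ ∉ {y₂, y₃}`,
then `T₁ ∩ T₂` and `T₁ ∩ T₃` have the same size. -/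
lemma pair_clash (D : TwoPartiteDigraph V) (hhom : D.Homogeneous) (R : V → V → Prop)
    (hR : ∀ (α : Equiv.Perm V), D.IsAuto α → ∀ v w, R v w ↔ R (α v) (α w))
    {y₁ y₂ y₃ : V} (hy₁ : y₁ ∈ D.Y) (hy₂ : y₂ ∈ D.Y) (hy₃ : y₃ ∈ D.Y)
    (h12 : y₁ ≠ y₂) (h13 : y₁ ≠ y₃)
    {T₁ T₂ T₃ : Set V} (e₁ : ∀ x, R y₁ x ↔ x ∈ T₁) (e₂ : ∀ x, R y₂ x ↔ x ∈ T₂)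
    (e₃ : ∀ x, R y₃ x ↔ x ∈ T₃) :
    (T₁ ∩ T₂).ncard = (T₁ ∩ T₃).ncard := by
  obtain ⟨α, hα, k₁, k₂⟩ := D.pairY hhom hy₁ hy₂ hy₃ h12 h13
  have key : ∀ x, (x ∈ T₁ ∩ T₂) ↔ (α x ∈ T₁ ∩ T₃) := by
    intro x
    constructor
    · rintro ⟨hx1, hx2⟩
      constructor
      · have := (hR α hα y₁ x).mp ((e₁ x).mpr hx1); rw [k₁] at this; exact (e₁ _).mp this
      · have := (hR α hα y₂ x).mp ((e₂ x).mpr hx2); rw [k₂] at this; exact (e₃ _).mp this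
    · rintro ⟨hx1, hx2⟩
      constructor
      · have : R (α y₁) (α x) := by rw [k₁]; exact (e₁ _).mpr hx1
        exact (e₁ x).mp ((hR α hα y₁ x).mpr this)
      · have : R (α y₂) (α x) := by rw [k₂]; exact (e₃ _).mpr hx2
        exact (e₂ x).mp ((hR α hα y₂ x).mpr this)
  have himg : α '' (T₁ ∩ T₂) = T₁ ∩ T₃ := by
    ext z
    constructor
    · rintro ⟨w, hw, rfl⟩; exact (key w).mp hw
    · intro hz
      refine ⟨α.symm z, ?_, by simp⟩
      have := (key (α.symm z))
      simp only [Equiv.apply_symm_apply] at this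
      exact this.mpr hz
  rw [← himg, Set.ncard_image_of_injective _ α.injective]

end Aux2

section Aux3
variable {V : Type*}

/-- The same digraph with the two sides exchanged. -/
def swap (D : TwoPartiteDigraph V) : TwoPartiteDigraph V where
  X := D.Y
  Y := D.X
  cover := by rw [Set.union_comm]; exact D.cover
  disj := D.disj.symm
  E := D.E
  mem_of_edge := fun u v h => (D.mem_of_edge u v h).symm
  not_opposite := D.not_opposite

/-- The same digraph with all edges reversed. -/
def rev (D : TwoPartiteDigraph V) : TwoPartiteDigraph V where
  X := D.X
  Y := D.Y
  cover := D.cover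
  disj := D.disj
  E := fun u v => D.E v u
  mem_of_edge := fun u v h => by
    rcases D.mem_of_edge v u h with ⟨h1, h2⟩ | ⟨h1, h2⟩
    · exact Or.inr ⟨h2, h1⟩
    · exact Or.inl ⟨h2, h1⟩
  not_opposite := fun u v h h' => D.not_opposite v u h h'

@[simp] lemma swap_X (D : TwoPartiteDigraph V) : D.swap.X = D.Y := rfl
@[simp] lemma swap_Y (D : TwoPartiteDigraph V) : D.swap.Y = D.X := rfl
@[simp] lemma swap_E (D : TwoPartiteDigraph V) (u v : V) : D.swap.E u v ↔ D.E u v := Iff.rfl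
@[simp] lemma rev_X (D : TwoPartiteDigraph V) : D.rev.X = D.X := rfl
@[simp] lemma rev_Y (D : TwoPartiteDigraph V) : D.rev.Y = D.Y := rfl
@[simp] lemma rev_E (D : TwoPartiteDigraph V) (u v : V) : D.rev.E u v ↔ D.E v u := Iff.rfl
@[simp] lemma swap_adj (D : TwoPartiteDigraph V) (u v : V) : D.swap.Adj u v ↔ D.Adj u v :=
  Iff.rfl
@[simp] lemma rev_adj (D : TwoPartiteDigraph V) (u v : V) : D.rev.Adj u v ↔ D.Adj u v :=
  Or.comm

lemma homogeneous_swap {D : TwoPartiteDigraph V} (hhom : D.Homogeneous) :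
    D.swap.Homogeneous := by
  intro A hA φ hiso
  obtain ⟨α, hα, hext⟩ := hhom A hA φ ⟨hiso.1, hiso.2.2.1, hiso.2.1, hiso.2.2.2⟩
  exact ⟨α, ⟨hα.2.1, hα.1, hα.2.2⟩, hext⟩

lemma homogeneous_rev {D : TwoPartiteDigraph V} (hhom : D.Homogeneous) :
    D.rev.Homogeneous := by
  intro A hA φ hiso
  obtain ⟨α, hα, hext⟩ := hhom A hA φ
    ⟨hiso.1, hiso.2.1, hiso.2.2.1, fun a ha b hb => hiso.2.2.2 b hb a ha⟩
  exact ⟨α, ⟨hα.1, hα.2.1, fun u v => hα.2.2 v u⟩, hext⟩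

/-- Transport of single-vertex patterns: if some vertex of `X` has an out-neighbour,
then every vertex of `X` has one; and similarly in all other variants. -/
lemma transport_plusX (D : TwoPartiteDigraph V) (hhom : D.Homogeneous) {x₀ y₀ : V}
    (hx₀ : x₀ ∈ D.X) (hy₀ : y₀ ∈ D.Y) (h : D.E x₀ y₀) :
    ∀ x ∈ D.X, ∃ y ∈ D.Y, D.E x y := by
  intro x hx
  obtain ⟨α, hα, hval⟩ := D.singleX hhom hx₀ hx
  refine ⟨α y₀, (hα.2.1 y₀).mp hy₀, ?_⟩
  have := (hα.2.2 x₀ y₀).mp h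
  rwa [hval] at this

lemma transport_minusX (D : TwoPartiteDigraph V) (hhom : D.Homogeneous) {x₀ y₀ : V}
    (hx₀ : x₀ ∈ D.X) (hy₀ : y₀ ∈ D.Y) (h : D.E y₀ x₀) :
    ∀ x ∈ D.X, ∃ y ∈ D.Y, D.E y x := by
  intro x hx
  obtain ⟨α, hα, hval⟩ := D.singleX hhom hx₀ hx
  refine ⟨α y₀, (hα.2.1 y₀).mp hy₀, ?_⟩
  have := (hα.2.2 y₀ x₀).mp h
  rwa [hval] at this

lemma transport_perpX (D : TwoPartiteDigraph V) (hhom : D.Homogeneous) {x₀ y₀ : V}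
    (hx₀ : x₀ ∈ D.X) (hy₀ : y₀ ∈ D.Y) (h : ¬ D.Adj x₀ y₀) :
    ∀ x ∈ D.X, ∃ y ∈ D.Y, ¬ D.Adj x y := by
  intro x hx
  obtain ⟨α, hα, hval⟩ := D.singleX hhom hx₀ hx
  refine ⟨α y₀, (hα.2.1 y₀).mp hy₀, ?_⟩
  intro hadj
  rw [← hval] at hadj
  exact h ((hα.adj_iff x₀ y₀).mpr hadj)

lemma transport_plusY (D : TwoPartiteDigraph V) (hhom : D.Homogeneous) {x₀ y₀ : V}
    (hx₀ : x₀ ∈ D.X) (hy₀ : y₀ ∈ D.Y) (h : D.E y₀ x₀) :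
    ∀ y ∈ D.Y, ∃ x ∈ D.X, D.E y x := by
  intro y hy
  obtain ⟨α, hα, hval⟩ := D.singleY hhom hy₀ hy
  refine ⟨α x₀, (hα.1 x₀).mp hx₀, ?_⟩
  have := (hα.2.2 y₀ x₀).mp h
  rwa [hval] at this

lemma transport_minusY (D : TwoPartiteDigraph V) (hhom : D.Homogeneous) {x₀ y₀ : V}
    (hx₀ : x₀ ∈ D.X) (hy₀ : y₀ ∈ D.Y) (h : D.E x₀ y₀) :
    ∀ y ∈ D.Y, ∃ x ∈ D.X, D.E x y := by
  intro y hy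
  obtain ⟨α, hα, hval⟩ := D.singleY hhom hy₀ hy
  refine ⟨α x₀, (hα.1 x₀).mp hx₀, ?_⟩
  have := (hα.2.2 x₀ y₀).mp h
  rwa [hval] at this

lemma transport_perpY (D : TwoPartiteDigraph V) (hhom : D.Homogeneous) {x₀ y₀ : V}
    (hx₀ : x₀ ∈ D.X) (hy₀ : y₀ ∈ D.Y) (h : ¬ D.Adj y₀ x₀) :
    ∀ y ∈ D.Y, ∃ x ∈ D.X, ¬ D.Adj y x := by
  intro y hy
  obtain ⟨α, hα, hval⟩ := D.singleY hhom hy₀ hy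
  refine ⟨α x₀, (hα.1 x₀).mp hx₀, ?_⟩
  intro hadj
  rw [← hval] at hadj
  exact h ((hα.adj_iff y₀ x₀).mpr hadj)

/-- If no vertex of `X` has two out-neighbours (and edges exist in the relevant
directions), we get a contradiction pattern used repeatedly: here we derive that some
vertex of `Y` has two in-neighbours. -/
lemma claim02 (D : TwoPartiteDigraph V) (hhom : D.Homogeneous)
    (bplusX : ∀ x ∈ D.X, ∃ y ∈ D.Y, D.E x y)
    (bplusY : ∀ y ∈ D.Y, ∃ x ∈ D.X, D.E y x)
    (hP : ∃ x ∈ D.X, ∃ y₁ ∈ D.Y, ∃ y₂ ∈ D.Y, y₁ ≠ y₂ ∧ D.E x y₁ ∧ D.E x y₂) :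
    ∃ y ∈ D.Y, ∃ x₁ ∈ D.X, ∃ x₂ ∈ D.X, x₁ ≠ x₂ ∧ D.E x₁ y ∧ D.E x₂ y := by
  by_contra hcon
  push_neg at hcon
  have huniq : ∀ y ∈ D.Y, ∀ x₁ x₂ : V, D.E x₁ y → D.E x₂ y → x₁ = x₂ := by
    intro y hy x₁ x₂ e₁ e₂
    by_contra hne
    exact hcon y hy x₁ (D.memX_of_edge_to hy e₁) x₂ (D.memX_of_edge_to hy e₂) hne e₁ e₂
  obtain ⟨xh, hxh, y₁, hy₁, y₂, hy₂, hne, he₁, he₂⟩ := hP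
  obtain ⟨xo, hxo, heo⟩ := bplusY y₁ hy₁
  have hxoh : xo ≠ xh := fun h => D.not_opposite xh y₁ he₁ (h ▸ heo)
  obtain ⟨y₃, hy₃, he₃⟩ := bplusX xo hxo
  have h13 : y₁ ≠ y₃ := by
    intro h
    exact hxoh (huniq y₁ hy₁ xo xh (h ▸ he₃) he₁)
  obtain ⟨α, hα, k₁, k₂⟩ := D.pairY hhom hy₁ hy₂ hy₃ hne h13
  have hstep : D.E (α xh) y₁ := by
    have := (hα.2.2 xh y₁).mp he₁
    rwa [k₁] at this
  have hfix : α xh = xh := huniq y₁ hy₁ (α xh) xh hstep he₁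
  have : D.E xh y₃ := by
    have := (hα.2.2 xh y₂).mp he₂
    rwa [k₂, hfix] at this
  exact hxoh (huniq y₃ hy₃ xo xh he₃ this)

end Aux3

section Pure
variable {V : Type*}

/-- Auxiliary: under the hypothesis that no set of size `n+1` is fully out-dominated,
realizers of `n`-sets have exact out-neighbourhoods, and comparing three of them gives a
numerical contradiction, provided `X` has a point outside `A`. -/
lemma pure_branch1 (D : TwoPartiteDigraph V) (hhom : D.Homogeneous)
    (R : V → V → Prop)
    (hR : ∀ (α : Equiv.Perm V), D.IsAuto α → ∀ v w, R v w ↔ R (α v) (α w)) {n : ℕ}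
    (hIH : ∀ T : Set V, T.Finite → T ⊆ D.X → T.ncard ≤ n → ∃ y ∈ D.Y, ∀ t ∈ T, R y t)
    (key : ∀ T : Set V, T.Finite → T ⊆ D.X → T.ncard = n → ∀ y ∈ D.Y,
      (∀ t ∈ T, R y t) → ∀ x, R y x → x ∈ T)
    {A : Set V} (hA : A.Finite) (hAX : A ⊆ D.X) (hAc : A.ncard = n + 1) (hn : 2 ≤ n)
    {c : V} (hcX : c ∈ D.X) (hcA : c ∉ A) : False := by
  -- three distinct elements of A
  have hA0 : A.Nonempty := Set.nonempty_of_ncard_ne_zero (by omega)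
  obtain ⟨a₀, ha₀⟩ := hA0
  have hd1 : (A \ {a₀}).ncard + 1 = A.ncard := Set.ncard_diff_singleton_add_one ha₀ hA
  have hA1 : (A \ {a₀}).Nonempty := Set.nonempty_of_ncard_ne_zero (by omega)
  obtain ⟨a₁, ha₁m⟩ := hA1
  have ha₁ : a₁ ∈ A := ha₁m.1
  have hne10 : a₁ ≠ a₀ := by simpa using ha₁m.2
  have hd2 : ((A \ {a₀}) \ {a₁}).ncard + 1 = (A \ {a₀}).ncard :=
    Set.ncard_diff_singleton_add_one ha₁m (hA.diff)
  have hA2 : ((A \ {a₀}) \ {a₁}).Nonempty := Set.nonempty_of_ncard_ne_zero (by omega)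
  obtain ⟨a₂, ha₂m⟩ := hA2
  have ha₂ : a₂ ∈ A := ha₂m.1.1
  have hne20 : a₂ ≠ a₀ := by simpa using ha₂m.1.2
  have hne21 : a₂ ≠ a₁ := by simpa using ha₂m.2
  -- the three test sets
  set T₁ : Set V := A \ {a₀} with hT₁
  set T₂ : Set V := A \ {a₁} with hT₂
  set T₃ : Set V := insert c ((A \ {a₁}) \ {a₂}) with hT₃
  have hT₁f : T₁.Finite := hA.diff
  have hT₂f : T₂.Finite := hA.diff
  have hT₃f : T₃.Finite := ((hA.diff).diff).insert c
  have hT₁X : T₁ ⊆ D.X := (Set.diff_subset).trans hAX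
  have hT₂X : T₂ ⊆ D.X := (Set.diff_subset).trans hAX
  have hT₃X : T₃ ⊆ D.X :=
    Set.insert_subset hcX ((Set.diff_subset.trans Set.diff_subset).trans hAX)
  have hT₂c : T₂.ncard + 1 = A.ncard := Set.ncard_diff_singleton_add_one ha₁ hA
  have ha₂T₂ : a₂ ∈ T₂ := ⟨ha₂, by simpa using hne21⟩
  have hd3 : ((A \ {a₁}) \ {a₂}).ncard + 1 = T₂.ncard :=
    Set.ncard_diff_singleton_add_one ha₂T₂ hT₂f
  have hcT : c ∉ (A \ {a₁}) \ {a₂} := fun h => hcA h.1.1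
  have hT₃c : T₃.ncard = ((A \ {a₁}) \ {a₂}).ncard + 1 :=
    Set.ncard_insert_of_notMem hcT ((hA.diff).diff)
  -- realizers
  obtain ⟨y₁, hy₁, hr₁⟩ := hIH T₁ hT₁f hT₁X (by omega)
  obtain ⟨y₂, hy₂, hr₂⟩ := hIH T₂ hT₂f hT₂X (by omega)
  obtain ⟨y₃, hy₃, hr₃⟩ := hIH T₃ hT₃f hT₃X (by omega)
  have e₁ : ∀ x, R y₁ x ↔ x ∈ T₁ :=
    fun x => ⟨key T₁ hT₁f hT₁X (by omega) y₁ hy₁ hr₁ x, fun hx => hr₁ x hx⟩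
  have e₂ : ∀ x, R y₂ x ↔ x ∈ T₂ :=
    fun x => ⟨key T₂ hT₂f hT₂X (by omega) y₂ hy₂ hr₂ x, fun hx => hr₂ x hx⟩
  have e₃ : ∀ x, R y₃ x ↔ x ∈ T₃ :=
    fun x => ⟨key T₃ hT₃f hT₃X (by omega) y₃ hy₃ hr₃ x, fun hx => hr₃ x hx⟩
  have hne12 : y₁ ≠ y₂ := by
    intro h
    have h1 : a₁ ∈ T₁ := ⟨ha₁, by simpa using hne10⟩
    have := (e₂ a₁).mp (h ▸ ((e₁ a₁).mpr h1))
    exact this.2 rfl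
  have hne13 : y₁ ≠ y₃ := by
    intro h
    have h1 : a₀ ∈ T₃ := Or.inr ⟨⟨ha₀, by simpa using hne10.symm⟩, by simpa using hne20.symm⟩
    have := (e₁ a₀).mp (h ▸ ((e₃ a₀).mpr h1))
    exact this.2 rfl
  have hclash := D.pair_clash hhom R hR hy₁ hy₂ hy₃ hne12 hne13
    e₁ e₂ e₃
  -- compute the two intersections
  have hi1 : T₁ ∩ T₂ = (A \ {a₀}) \ {a₁} := by
    ext z
    simp only [hT₁, hT₂, Set.mem_inter_iff, Set.mem_diff, Set.mem_singleton_iff]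
    tauto
  have hi2 : T₁ ∩ T₃ = ((A \ {a₀}) \ {a₁}) \ {a₂} := by
    ext z
    simp only [hT₁, hT₃, Set.mem_inter_iff, Set.mem_diff, Set.mem_singleton_iff,
      Set.mem_insert_iff]
    constructor
    · rintro ⟨⟨hzA, hz0⟩, (rfl | ⟨⟨_, hz1⟩, hz2⟩)⟩
      · exact absurd hzA hcA
      · exact ⟨⟨⟨hzA, hz0⟩, hz1⟩, hz2⟩
    · rintro ⟨⟨⟨hzA, hz0⟩, hz1⟩, hz2⟩
      exact ⟨⟨hzA, hz0⟩, Or.inr ⟨⟨hzA, hz1⟩, hz2⟩⟩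
  have ha₂m' : a₂ ∈ (A \ {a₀}) \ {a₁} := ⟨⟨ha₂, by simpa using hne20⟩, by simpa using hne21⟩
  have hd4 : (((A \ {a₀}) \ {a₁}) \ {a₂}).ncard + 1 = ((A \ {a₀}) \ {a₁}).ncard :=
    Set.ncard_diff_singleton_add_one ha₂m' ((hA.diff).diff)
  rw [hi1, hi2] at hclash
  omega

/-- The missing-pure-type contradiction, complete case. -/
lemma LpureC (D : TwoPartiteDigraph V) (hhom : D.Homogeneous) (hcomp : D.CompleteBip)
    (bplusX : ∀ x ∈ D.X, ∃ y ∈ D.Y, D.E x y)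
    (hP : ∃ x ∈ D.X, ∃ y₁ ∈ D.Y, ∃ y₂ ∈ D.Y, y₁ ≠ y₂ ∧ D.E x y₁ ∧ D.E x y₂)
    {n : ℕ} (hn : 2 ≤ n)
    (hIH : ∀ T : Set V, T.Finite → T ⊆ D.X → T.ncard ≤ n → ∃ y ∈ D.Y, ∀ t ∈ T, D.E y t)
    {A : Set V} (hA : A.Finite) (hAX : A ⊆ D.X) (hAc : A.ncard = n + 1) :
    ∃ y ∈ D.Y, ∀ a ∈ A, D.E y a := by
  by_contra hcon
  have hno : ∀ A' : Set V, A'.Finite → A' ⊆ D.X → A'.ncard = n + 1 →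
      ¬ ∃ y ∈ D.Y, ∀ a ∈ A', D.E y a := by
    rintro A' hf hs hc ⟨y, hy, hr⟩
    apply hcon
    have htr := D.transfer hhom hf Set.finite_empty Set.finite_empty hA Set.finite_empty
      Set.finite_empty hs (Set.empty_subset _) (Set.empty_subset _) hAX (Set.empty_subset _)
      (Set.empty_subset _) (Set.disjoint_empty _).symm.symm (Set.disjoint_empty _)
      (Set.disjoint_empty _) (Set.disjoint_empty _) (Set.disjoint_empty _)
      (Set.disjoint_empty _) (by omega) rfl rfl
      ⟨y, hy, hr, fun b hb => absurd hb (Set.notMem_empty b),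
        fun c hc => absurd hc (Set.notMem_empty c)⟩
    obtain ⟨y', hy', h1, _, _⟩ := htr
    exact ⟨y', hy', h1⟩
  have key : ∀ T : Set V, T.Finite → T ⊆ D.X → T.ncard = n → ∀ y ∈ D.Y,
      (∀ t ∈ T, D.E y t) → ∀ x, D.E y x → x ∈ T := by
    intro T hTf hTX hTc y hy hr x hxy
    by_contra hxT
    have hxX : x ∈ D.X := D.memX_of_edge_from hy hxy
    refine hno (insert x T) (hTf.insert x) (Set.insert_subset hxX hTX)
      (by rw [Set.ncard_insert_of_notMem hxT hTf]; omega)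
      ⟨y, hy, ?_⟩
    rintro a (rfl | ha)
    · exact hxy
    · exact hr a ha
  by_cases hex : ∃ c ∈ D.X, c ∉ A
  · obtain ⟨c, hcX, hcA⟩ := hex
    exact D.pure_branch1 hhom D.E (fun α hα v w => hα.2.2 v w) hIH key hA hAX hAc hn hcX hcA
  · -- X = A
    push_neg at hex
    have hXA : D.X = A := Set.Subset.antisymm hex hAX
    have hA0 : A.Nonempty := Set.nonempty_of_ncard_ne_zero (by omega)
    obtain ⟨a₀, ha₀⟩ := hA0
    set T₀ : Set V := A \ {a₀} with hT₀
    have hT₀f : T₀.Finite := hA.diff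
    have hT₀X : T₀ ⊆ D.X := (Set.diff_subset).trans hAX
    have hT₀c : T₀.ncard + 1 = A.ncard := Set.ncard_diff_singleton_add_one ha₀ hA
    obtain ⟨y₀, hy₀, hr₀⟩ := hIH T₀ hT₀f hT₀X (by omega)
    -- the unique in-neighbour of each y
    have hdel : ∀ y ∈ D.Y, ∃ δ ∈ D.X, ∀ x ∈ D.X, (D.E x y ↔ x = δ) := by
      intro y hy
      obtain ⟨α, hα, hval⟩ := D.singleY hhom hy₀ hy
      have hchar₀ : ∀ x, D.E y₀ x ↔ x ∈ T₀ :=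
        fun x => ⟨key T₀ hT₀f hT₀X (by omega) y₀ hy₀ hr₀ x, fun hx => hr₀ x hx⟩
      have hchary : ∀ x, D.E y x ↔ x ∈ α '' T₀ := by
        intro x
        constructor
        · intro h
          refine ⟨α.symm x, ?_, by simp⟩
          apply (hchar₀ (α.symm x)).mp
          have := (hα.2.2 y₀ (α.symm x))
          rw [hval] at this
          simp only [Equiv.apply_symm_apply] at this
          exact this.mpr h
        · rintro ⟨w, hw, rfl⟩
          have := (hα.2.2 y₀ w).mp ((hchar₀ w).mpr hw)
          rwa [hval] at this
      set O : Set V := α '' T₀ with hO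
      have hOX : O ⊆ D.X := by
        rintro _ ⟨w, hw, rfl⟩
        exact (hα.1 w).mp (hT₀X hw)
      have hOc : O.ncard = T₀.ncard := Set.ncard_image_of_injective _ α.injective
      have hXf : D.X.Finite := hXA ▸ hA
      have hXc : D.X.ncard = n + 1 := by rw [hXA]; exact hAc
      have hOf : O.Finite := hT₀f.image α
      have hcompl : (D.X \ O).ncard = 1 := by
        rw [Set.ncard_diff hOX hOf]
        omega
      obtain ⟨δ, hδ⟩ := Set.ncard_eq_one.mp hcompl
      have hδX : δ ∈ D.X := by
        have : δ ∈ D.X \ O := hδ ▸ rfl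
        exact this.1
      refine ⟨δ, hδX, ?_⟩
      intro x hxX
      constructor
      · intro hxy
        have hxO : x ∉ O := fun h => D.not_opposite x y hxy ((hchary x).mpr h)
        have : x ∈ D.X \ O := ⟨hxX, hxO⟩
        rw [hδ] at this
        exact this
      · rintro rfl
        have hxO : x ∉ O := by
          have : x ∈ D.X \ O := hδ ▸ rfl
          exact this.2
        have hnyx : ¬ D.E y x := fun h => hxO ((hchary x).mp h)
        rcases hcomp x hxX y hy with h | h
        · exact h
        · exact absurd h hnyx
    obtain ⟨xh, hxh, y₁, hy₁, y₂, hy₂, hne, he₁, he₂⟩ := hP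
    obtain ⟨δ₁, hδ₁X, hδ₁⟩ := hdel y₁ hy₁
    have hδ₁v : xh = δ₁ := (hδ₁ xh hxh).mp he₁
    -- a second point of X
    have hd5 : (D.X \ {xh}).ncard + 1 = D.X.ncard :=
      Set.ncard_diff_singleton_add_one hxh (hXA ▸ hA)
    have hXc : D.X.ncard = n + 1 := by rw [hXA]; exact hAc
    have hX1 : (D.X \ {xh}).Nonempty := Set.nonempty_of_ncard_ne_zero (by omega)
    obtain ⟨x', hx'm⟩ := hX1
    have hx'X : x' ∈ D.X := hx'm.1
    have hx'ne : x' ≠ xh := by simpa using hx'm.2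
    obtain ⟨y₃, hy₃, he₃⟩ := bplusX x' hx'X
    obtain ⟨δ₃, hδ₃X, hδ₃⟩ := hdel y₃ hy₃
    have hδ₃v : x' = δ₃ := (hδ₃ x' hx'X).mp he₃
    have h13 : y₁ ≠ y₃ := by
      intro h
      exact hx'ne ((hδ₁ x' hx'X).mp (h ▸ he₃) ▸ hδ₁v.symm ▸ rfl)
    obtain ⟨α, hα, k₁, k₂⟩ := D.pairY hhom hy₁ hy₂ hy₃ hne h13
    have hs1 : D.E (α xh) y₁ := by
      have := (hα.2.2 xh y₁).mp he₁
      rwa [k₁] at this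
    have hfix : α xh = xh := by
      have := (hδ₁ (α xh) ((hα.1 xh).mp hxh)).mp hs1
      rw [this, ← hδ₁v]
    have hs2 : D.E xh y₃ := by
      have := (hα.2.2 xh y₂).mp he₂
      rwa [k₂, hfix] at this
    have : xh = δ₃ := (hδ₃ xh hxh).mp hs2
    exact hx'ne (hδ₃v ▸ this ▸ rfl)


/-- The missing-pure-type contradiction, incomplete case, `+`-patterns. -/
lemma LpureI (D : TwoPartiteDigraph V) (hhom : D.Homogeneous)
    (bminusY : ∀ y ∈ D.Y, ∃ x ∈ D.X, D.E x y)
    (bperpY : ∀ y ∈ D.Y, ∃ x ∈ D.X, ¬ D.Adj y x)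
    {n : ℕ} (hn : 2 ≤ n)
    (hIH : ∀ T : Set V, T.Finite → T ⊆ D.X → T.ncard ≤ n → ∃ y ∈ D.Y, ∀ t ∈ T, D.E y t)
    {A : Set V} (hA : A.Finite) (hAX : A ⊆ D.X) (hAc : A.ncard = n + 1) :
    ∃ y ∈ D.Y, ∀ a ∈ A, D.E y a := by
  by_contra hcon
  have hno : ∀ A' : Set V, A'.Finite → A' ⊆ D.X → A'.ncard = n + 1 →
      ¬ ∃ y ∈ D.Y, ∀ a ∈ A', D.E y a := by
    rintro A' hf hs hc ⟨y, hy, hr⟩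
    apply hcon
    have htr := D.transfer hhom hf Set.finite_empty Set.finite_empty hA Set.finite_empty
      Set.finite_empty hs (Set.empty_subset _) (Set.empty_subset _) hAX (Set.empty_subset _)
      (Set.empty_subset _) (Set.disjoint_empty _) (Set.disjoint_empty _)
      (Set.disjoint_empty _) (Set.disjoint_empty _) (Set.disjoint_empty _)
      (Set.disjoint_empty _) (by omega) rfl rfl
      ⟨y, hy, hr, fun b hb => absurd hb (Set.notMem_empty b),
        fun c hc => absurd hc (Set.notMem_empty c)⟩
    obtain ⟨y', hy', h1, _, _⟩ := htr
    exact ⟨y', hy', h1⟩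
  have key : ∀ T : Set V, T.Finite → T ⊆ D.X → T.ncard = n → ∀ y ∈ D.Y,
      (∀ t ∈ T, D.E y t) → ∀ x, D.E y x → x ∈ T := by
    intro T hTf hTX hTc y hy hr x hxy
    by_contra hxT
    have hxX : x ∈ D.X := D.memX_of_edge_from hy hxy
    refine hno (insert x T) (hTf.insert x) (Set.insert_subset hxX hTX)
      (by rw [Set.ncard_insert_of_notMem hxT hTf]; omega)
      ⟨y, hy, ?_⟩
    rintro a (rfl | ha)
    · exact hxy
    · exact hr a ha
  by_cases hex : ∃ c ∈ D.X, c ∉ A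
  · obtain ⟨c, hcX, hcA⟩ := hex
    exact D.pure_branch1 hhom D.E (fun α hα v w => hα.2.2 v w) hIH key hA hAX hAc hn hcX hcA
  · push_neg at hex
    have hXA : D.X = A := Set.Subset.antisymm hex hAX
    have hA0 : A.Nonempty := Set.nonempty_of_ncard_ne_zero (by omega)
    obtain ⟨a₀, ha₀⟩ := hA0
    set T₀ : Set V := A \ {a₀} with hT₀
    have hT₀f : T₀.Finite := hA.diff
    have hT₀X : T₀ ⊆ D.X := (Set.diff_subset).trans hAX
    have hT₀c : T₀.ncard + 1 = A.ncard := Set.ncard_diff_singleton_add_one ha₀ hA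
    obtain ⟨y₀, hy₀, hr₀⟩ := hIH T₀ hT₀f hT₀X (by omega)
    have hchar₀ : ∀ x, D.E y₀ x ↔ x ∈ T₀ :=
      fun x => ⟨key T₀ hT₀f hT₀X (by omega) y₀ hy₀ hr₀ x, fun hx => hr₀ x hx⟩
    obtain ⟨xm, hxmX, hxm⟩ := bminusY y₀ hy₀
    obtain ⟨xp, hxpX, hxp⟩ := bperpY y₀ hy₀
    have hxm0 : xm = a₀ := by
      have h1 : xm ∉ T₀ := fun h => D.not_opposite xm y₀ hxm ((hchar₀ xm).mpr h)
      have h2 : xm ∈ A := hXA ▸ hxmX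
      by_contra hne
      exact h1 ⟨h2, by simpa using hne⟩
    have hxp0 : xp = a₀ := by
      have h1 : xp ∉ T₀ := fun h => hxp (Or.inl ((hchar₀ xp).mpr h))
      have h2 : xp ∈ A := hXA ▸ hxpX
      by_contra hne
      exact h1 ⟨h2, by simpa using hne⟩
    exact hxp (Or.inr (by rw [hxp0, ← hxm0]; exact hxm))

/-- The missing-pure-type contradiction, incomplete case, `⊥`-patterns. -/
lemma LperpI (D : TwoPartiteDigraph V) (hhom : D.Homogeneous)
    (bplusY : ∀ y ∈ D.Y, ∃ x ∈ D.X, D.E y x)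
    (bminusY : ∀ y ∈ D.Y, ∃ x ∈ D.X, D.E x y)
    {n : ℕ} (hn : 2 ≤ n)
    (hIH : ∀ T : Set V, T.Finite → T ⊆ D.X → T.ncard ≤ n → ∃ y ∈ D.Y, ∀ t ∈ T, ¬ D.Adj y t)
    {A : Set V} (hA : A.Finite) (hAX : A ⊆ D.X) (hAc : A.ncard = n + 1) :
    ∃ y ∈ D.Y, ∀ a ∈ A, ¬ D.Adj y a := by
  classical
  set R : V → V → Prop := fun y x => x ∈ D.X ∧ ¬ D.Adj y x with hRdef
  have hR : ∀ (α : Equiv.Perm V), D.IsAuto α → ∀ v w, R v w ↔ R (α v) (α w) := by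
    intro α hα v w
    simp only [hRdef]
    constructor
    · rintro ⟨h1, h2⟩
      exact ⟨(hα.1 w).mp h1, fun h => h2 ((hα.adj_iff v w).mpr h)⟩
    · rintro ⟨h1, h2⟩
      exact ⟨(hα.1 w).mpr h1, fun h => h2 ((hα.adj_iff v w).mp h)⟩
  by_contra hcon
  have hno : ∀ A' : Set V, A'.Finite → A' ⊆ D.X → A'.ncard = n + 1 →
      ¬ ∃ y ∈ D.Y, ∀ a ∈ A', ¬ D.Adj y a := by
    rintro A' hf hs hc ⟨y, hy, hr⟩
    apply hcon
    have htr := D.transfer hhom Set.finite_empty Set.finite_empty hf Set.finite_empty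
      Set.finite_empty hA (Set.empty_subset _) (Set.empty_subset _) hs (Set.empty_subset _)
      (Set.empty_subset _) hAX (Set.disjoint_empty _) ((Set.disjoint_empty _).symm)
      ((Set.disjoint_empty _).symm) (Set.disjoint_empty _) ((Set.disjoint_empty _).symm)
      ((Set.disjoint_empty _).symm) rfl rfl (by omega)
      ⟨y, hy, fun a ha => absurd ha (Set.notMem_empty a),
        fun b hb => absurd hb (Set.notMem_empty b), hr⟩
    obtain ⟨y', hy', _, _, h3⟩ := htr
    exact ⟨y', hy', h3⟩
  have hIH' : ∀ T : Set V, T.Finite → T ⊆ D.X → T.ncard ≤ n → ∃ y ∈ D.Y, ∀ t ∈ T, R y t := by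
    intro T hf hs hc
    obtain ⟨y, hy, hr⟩ := hIH T hf hs hc
    exact ⟨y, hy, fun t ht => ⟨hs ht, hr t ht⟩⟩
  have key : ∀ T : Set V, T.Finite → T ⊆ D.X → T.ncard = n → ∀ y ∈ D.Y,
      (∀ t ∈ T, R y t) → ∀ x, R y x → x ∈ T := by
    intro T hTf hTX hTc y hy hr x hxy
    by_contra hxT
    refine hno (insert x T) (hTf.insert x) (Set.insert_subset hxy.1 hTX)
      (by rw [Set.ncard_insert_of_notMem hxT hTf]; omega)
      ⟨y, hy, ?_⟩
    rintro a (rfl | ha)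
    · exact hxy.2
    · exact (hr a ha).2
  by_cases hex : ∃ c ∈ D.X, c ∉ A
  · obtain ⟨c, hcX, hcA⟩ := hex
    exact D.pure_branch1 hhom R hR hIH' key hA hAX hAc hn hcX hcA
  · push_neg at hex
    have hXA : D.X = A := Set.Subset.antisymm hex hAX
    have hA0 : A.Nonempty := Set.nonempty_of_ncard_ne_zero (by omega)
    obtain ⟨a₀, ha₀⟩ := hA0
    set T₀ : Set V := A \ {a₀} with hT₀
    have hT₀f : T₀.Finite := hA.diff
    have hT₀X : T₀ ⊆ D.X := (Set.diff_subset).trans hAX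
    have hT₀c : T₀.ncard + 1 = A.ncard := Set.ncard_diff_singleton_add_one ha₀ hA
    obtain ⟨y₀, hy₀, hr₀⟩ := hIH' T₀ hT₀f hT₀X (by omega)
    have hchar₀ : ∀ x, R y₀ x ↔ x ∈ T₀ :=
      fun x => ⟨key T₀ hT₀f hT₀X (by omega) y₀ hy₀ hr₀ x, fun hx => hr₀ x hx⟩
    obtain ⟨xp, hxpX, hxp⟩ := bplusY y₀ hy₀
    obtain ⟨xm, hxmX, hxm⟩ := bminusY y₀ hy₀
    have hxp0 : xp = a₀ := by
      have h1 : xp ∉ T₀ := fun h => ((hchar₀ xp).mpr h).2 (Or.inl hxp)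
      have h2 : xp ∈ A := hXA ▸ hxpX
      by_contra hne
      exact h1 ⟨h2, by simpa using hne⟩
    have hxm0 : xm = a₀ := by
      have h1 : xm ∉ T₀ := fun h => ((hchar₀ xm).mpr h).2 (Or.inr hxm)
      have h2 : xm ∈ A := hXA ▸ hxmX
      by_contra hne
      exact h1 ⟨h2, by simpa using hne⟩
    exact D.not_opposite y₀ xp hxp (by rw [hxp0, ← hxm0]; exact hxm)


section Master
variable {V : Type*}

/-- Master lemma, complete case: all two-part patterns over `X` are realized in `Y`. -/
lemma genC (D : TwoPartiteDigraph V) (hhom : D.Homogeneous) (hcomp : D.CompleteBip)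
    (hYne : D.Y.Nonempty)
    (bplusX : ∀ x ∈ D.X, ∃ y ∈ D.Y, D.E x y)
    (bminusX : ∀ x ∈ D.X, ∃ y ∈ D.Y, D.E y x)
    (bplusY : ∀ y ∈ D.Y, ∃ x ∈ D.X, D.E y x)
    (bminusY : ∀ y ∈ D.Y, ∃ x ∈ D.X, D.E x y)
    (hP : ∃ x ∈ D.X, ∃ y₁ ∈ D.Y, ∃ y₂ ∈ D.Y, y₁ ≠ y₂ ∧ D.E x y₁ ∧ D.E x y₂)
    (hQ : ∃ y ∈ D.Y, ∃ x₁ ∈ D.X, ∃ x₂ ∈ D.X, x₁ ≠ x₂ ∧ D.E y x₁ ∧ D.E y x₂) :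
    ∀ n, ∀ A B : Set V, A.Finite → B.Finite → A ⊆ D.X → B ⊆ D.X → Disjoint A B →
      A.ncard + B.ncard ≤ n → ∃ y ∈ D.Y, (∀ a ∈ A, D.E y a) ∧ (∀ b ∈ B, D.E b y) := by
  intro n
  induction n with
  | zero =>
    intro A B hA hB hAX hBX hAB hle
    obtain ⟨y, hy⟩ := hYne
    have hA0 : A = ∅ := (Set.ncard_eq_zero hA).mp (by omega)
    have hB0 : B = ∅ := (Set.ncard_eq_zero hB).mp (by omega)
    subst hA0 hB0
    exact ⟨y, hy, by simp, by simp⟩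
  | succ n ih =>
    intro A B hA hB hAX hBX hAB hle
    by_cases hle' : A.ncard + B.ncard ≤ n
    · exact ih A B hA hB hAX hBX hAB hle'
    push_neg at hle'
    have hsum : A.ncard + B.ncard = n + 1 := le_antisymm hle hle'
    by_cases hi : 1 ≤ A.ncard
    · by_cases hj : 1 ≤ B.ncard
      · -- mixed case
        by_contra hcon
        have hno : ∀ A' B' : Set V, A'.Finite → B'.Finite → A' ⊆ D.X → B' ⊆ D.X →
            Disjoint A' B' → A'.ncard = A.ncard → B'.ncard = B.ncard →
            ¬ ∃ y ∈ D.Y, (∀ a ∈ A', D.E y a) ∧ (∀ b ∈ B', D.E b y) := by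
          rintro A' B' hf1 hf2 hs1 hs2 hd hc1 hc2 ⟨y, hy, g1, g2⟩
          apply hcon
          have htr := D.transfer hhom hf1 hf2 Set.finite_empty hA hB Set.finite_empty
            hs1 hs2 (Set.empty_subset _) hAX hBX (Set.empty_subset _)
            hd (Set.disjoint_empty _) (Set.disjoint_empty _)
            hAB (Set.disjoint_empty _) (Set.disjoint_empty _)
            hc1 hc2 rfl
            ⟨y, hy, g1, g2, fun c hc => absurd hc (Set.notMem_empty c)⟩
          obtain ⟨y', hy', k1, k2, _⟩ := htr
          exact ⟨y', hy', k1, k2⟩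
        obtain ⟨a, ha⟩ : A.Nonempty := Set.nonempty_of_ncard_ne_zero (by omega)
        obtain ⟨b, hb⟩ : B.Nonempty := Set.nonempty_of_ncard_ne_zero (by omega)
        have hc1 : (A \ {a}).ncard + 1 = A.ncard := Set.ncard_diff_singleton_add_one ha hA
        have hc2 : (B \ {b}).ncard + 1 = B.ncard := Set.ncard_diff_singleton_add_one hb hB
        obtain ⟨y₁, hy₁, h1p, h1m⟩ := ih (A \ {a}) B (hA.diff) hB
          (Set.diff_subset.trans hAX) hBX (hAB.mono_left Set.diff_subset) (by omega)
        have hN1 : {x | D.E y₁ x} ⊆ A \ {a} := by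
          intro x hx
          by_contra hxT
          have hxX : x ∈ D.X := D.memX_of_edge_from hy₁ hx
          by_cases hxa : x ∈ A
          · have hxa' : x = a := by
              by_contra hne
              exact hxT ⟨hxa, by simpa using hne⟩
            subst hxa'
            refine hcon ⟨y₁, hy₁, ?_, h1m⟩
            intro a' ha'
            by_cases h' : a' = x
            · exact h' ▸ hx
            · exact h1p a' ⟨ha', by simpa using h'⟩
          · by_cases hxb : x ∈ B
            · exact D.not_opposite y₁ x hx (h1m x hxb)
            · refine hno (insert x (A \ {a})) B ((hA.diff).insert x) hB
                (Set.insert_subset hxX (Set.diff_subset.trans hAX)) hBX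
                (Set.disjoint_left.mpr ?_)
                (by rw [Set.ncard_insert_of_notMem (fun h => hxT h) (hA.diff)]; omega) rfl
                ⟨y₁, hy₁, ?_, h1m⟩
              · rintro z (rfl | hz)
                · exact hxb
                · exact Set.disjoint_left.mp hAB hz.1
              · rintro a' (rfl | ha')
                · exact hx
                · exact h1p a' ha'
        obtain ⟨y₂, hy₂, h2p, h2m⟩ := ih A (B \ {b}) hA (hB.diff) hAX
          (Set.diff_subset.trans hBX) (hAB.mono_right Set.diff_subset) (by omega)
        exact D.Rset_clash hhom D.E (fun α hα v w => hα.2.2 v w) hy₁ hy₂ (hA.diff)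
          hN1 (fun x hx => h2p x hx) (by omega)
      · -- B = ∅ , pure `+` case
        have hB0 : B = ∅ := (Set.ncard_eq_zero hB).mp (by omega)
        subst hB0
        have hAc : A.ncard = n + 1 := by simpa using hsum
        by_cases hn0 : n = 0
        · subst hn0
          obtain ⟨a, rfl⟩ := Set.ncard_eq_one.mp (by omega : A.ncard = 1)
          obtain ⟨y, hy, he⟩ := bminusX a (hAX rfl)
          refine ⟨y, hy, ?_, by simp⟩
          rintro a' rfl
          exact he
        by_cases hn1 : n = 1
        · subst hn1
          obtain ⟨yq, hyq, x₁, hx₁, x₂, hx₂, hne, he₁, he₂⟩ := hQ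
          have htr := D.transfer hhom (A := {x₁, x₂}) (B := ∅) (C := ∅) (A' := A)
            (B' := ∅) (C' := ∅) ((Set.finite_singleton x₂).insert x₁)
            Set.finite_empty Set.finite_empty hA Set.finite_empty Set.finite_empty
            (by rintro z (rfl | rfl) <;> assumption) (Set.empty_subset _)
            (Set.empty_subset _) hAX (Set.empty_subset _) (Set.empty_subset _)
            (Set.disjoint_empty _) (Set.disjoint_empty _) (Set.disjoint_empty _)
            (Set.disjoint_empty _) (Set.disjoint_empty _) (Set.disjoint_empty _)
            (by rw [Set.ncard_pair hne, hAc]) rfl rfl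
            ⟨yq, hyq, by rintro z (rfl | rfl) <;> assumption,
              fun b hb => absurd hb (Set.notMem_empty b),
              fun c hc => absurd hc (Set.notMem_empty c)⟩
          obtain ⟨y', hy', k1, _, _⟩ := htr
          exact ⟨y', hy', k1, by simp⟩
        · have hn : 2 ≤ n := by omega
          have hIH' : ∀ T : Set V, T.Finite → T ⊆ D.X → T.ncard ≤ n →
              ∃ y ∈ D.Y, ∀ t ∈ T, D.E y t := by
            intro T hTf hTX hTc
            obtain ⟨y, hy, h1, _⟩ := ih T ∅ hTf Set.finite_empty hTX (Set.empty_subset _)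
              (Set.disjoint_empty _) (by simpa using hTc)
            exact ⟨y, hy, h1⟩
          obtain ⟨y, hy, h1⟩ := D.LpureC hhom hcomp bplusX hP hn hIH' hA hAX hAc
          exact ⟨y, hy, h1, by simp⟩
    · -- A = ∅ , pure `-` case
      have hA0 : A = ∅ := (Set.ncard_eq_zero hA).mp (by omega)
      subst hA0
      have hBc : B.ncard = n + 1 := by simpa using hsum
      by_cases hn0 : n = 0
      · subst hn0
        obtain ⟨b, rfl⟩ := Set.ncard_eq_one.mp (by omega : B.ncard = 1)
        obtain ⟨y, hy, he⟩ := bplusX b (hBX rfl)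
        refine ⟨y, hy, by simp, ?_⟩
        rintro b' rfl
        exact he
      by_cases hn1 : n = 1
      · subst hn1
        obtain ⟨yq, hyq, x₁, hx₁, x₂, hx₂, hne, he₁, he₂⟩ :=
          D.claim02 hhom bplusX bplusY hP
        have htr := D.transfer hhom (A := ∅) (B := {x₁, x₂}) (C := ∅) (A' := ∅)
          (B' := B) (C' := ∅) Set.finite_empty
          ((Set.finite_singleton x₂).insert x₁) Set.finite_empty
          Set.finite_empty hB Set.finite_empty
          (Set.empty_subset _) (by rintro z (rfl | rfl) <;> assumption) (Set.empty_subset _)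
          (Set.empty_subset _) hBX (Set.empty_subset _)
          ((Set.disjoint_empty _).symm) (Set.disjoint_empty _) (Set.disjoint_empty _)
          ((Set.disjoint_empty _).symm) (Set.disjoint_empty _) (Set.disjoint_empty _)
          rfl (by rw [Set.ncard_pair hne, hBc]) rfl
          ⟨yq, hyq, fun a ha => absurd ha (Set.notMem_empty a),
            by rintro z (rfl | rfl) <;> assumption,
            fun c hc => absurd hc (Set.notMem_empty c)⟩
        obtain ⟨y', hy', _, k2, _⟩ := htr
        exact ⟨y', hy', by simp, k2⟩
      · have hn : 2 ≤ n := by omega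
        have hcomp' : D.rev.CompleteBip := by
          intro x hx y hy
          exact (D.rev_adj x y).mpr (hcomp x hx y hy)
        have hP' : ∃ x ∈ D.rev.X, ∃ y₁ ∈ D.rev.Y, ∃ y₂ ∈ D.rev.Y,
            y₁ ≠ y₂ ∧ D.rev.E x y₁ ∧ D.rev.E x y₂ := by
          obtain ⟨yq, hyq, x₁, hx₁, x₂, hx₂, hne, he₁, he₂⟩ :=
            D.swap.claim02 (homogeneous_swap hhom) bplusY bplusX hQ
          exact ⟨yq, hyq, x₁, hx₁, x₂, hx₂, hne, he₁, he₂⟩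
        have hIH' : ∀ T : Set V, T.Finite → T ⊆ D.rev.X → T.ncard ≤ n →
            ∃ y ∈ D.rev.Y, ∀ t ∈ T, D.rev.E y t := by
          intro T hTf hTX hTc
          obtain ⟨y, hy, _, h2⟩ := ih ∅ T Set.finite_empty hTf (Set.empty_subset _) hTX
            ((Set.disjoint_empty _).symm) (by simpa using hTc)
          exact ⟨y, hy, h2⟩
        obtain ⟨y, hy, h1⟩ := D.rev.LpureC (homogeneous_rev hhom) hcomp' bminusX hP' hn
          hIH' hB hBX hBc
        exact ⟨y, hy, by simp, h1⟩

end Master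

section BaseI
variable {V : Type*}

lemma base200 (D : TwoPartiteDigraph V) (hhom : D.Homogeneous) (hYne : D.Y.Nonempty)
    (bplusX : ∀ x ∈ D.X, ∃ y ∈ D.Y, D.E x y)
    (bplusY : ∀ y ∈ D.Y, ∃ x ∈ D.X, D.E y x)
    (bperpX : ∀ x ∈ D.X, ∃ y ∈ D.Y, ¬ D.Adj x y) :
    ∃ y ∈ D.Y, ∃ x₁ ∈ D.X, ∃ x₂ ∈ D.X, x₁ ≠ x₂ ∧ D.E y x₁ ∧ D.E y x₂ := by
  by_contra hcon
  push_neg at hcon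
  have huniq : ∀ y ∈ D.Y, ∀ x₁ x₂ : V, D.E y x₁ → D.E y x₂ → x₁ = x₂ := by
    intro y hy x₁ x₂ e₁ e₂
    by_contra hne
    exact hcon y hy x₁ (D.memX_of_edge_from hy e₁) x₂ (D.memX_of_edge_from hy e₂) hne e₁ e₂
  obtain ⟨y, hy⟩ := hYne
  obtain ⟨x, hxX, hex⟩ := bplusY y hy
  obtain ⟨y', hy', he'⟩ := bplusX x hxX
  obtain ⟨y'', hy'', hp⟩ := bperpX x hxX
  have hne1 : y ≠ y' := fun h => D.not_opposite y x hex (h ▸ he')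
  have hne2 : y ≠ y'' := fun h => hp (Or.inr (h ▸ hex))
  obtain ⟨α, hα, k₁, k₂⟩ := D.pairY hhom hy hy' hy'' hne1 hne2
  have hs : D.E y (α x) := by
    have := (hα.2.2 y x).mp hex
    rwa [k₁] at this
  have hfix : α x = x := huniq y hy (α x) x hs hex
  have : D.E x y'' := by
    have := (hα.2.2 x y').mp he'
    rwa [k₂, hfix] at this
  exact hp (Or.inl this)

lemma base020 (D : TwoPartiteDigraph V) (hhom : D.Homogeneous) (hYne : D.Y.Nonempty)
    (bminusX : ∀ x ∈ D.X, ∃ y ∈ D.Y, D.E y x)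
    (bminusY : ∀ y ∈ D.Y, ∃ x ∈ D.X, D.E x y)
    (bperpX : ∀ x ∈ D.X, ∃ y ∈ D.Y, ¬ D.Adj x y) :
    ∃ y ∈ D.Y, ∃ x₁ ∈ D.X, ∃ x₂ ∈ D.X, x₁ ≠ x₂ ∧ D.E x₁ y ∧ D.E x₂ y := by
  by_contra hcon
  push_neg at hcon
  have huniq : ∀ y ∈ D.Y, ∀ x₁ x₂ : V, D.E x₁ y → D.E x₂ y → x₁ = x₂ := by
    intro y hy x₁ x₂ e₁ e₂
    by_contra hne
    exact hcon y hy x₁ (D.memX_of_edge_to hy e₁) x₂ (D.memX_of_edge_to hy e₂) hne e₁ e₂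
  obtain ⟨y, hy⟩ := hYne
  obtain ⟨x, hxX, hex⟩ := bminusY y hy
  obtain ⟨y', hy', he'⟩ := bminusX x hxX
  obtain ⟨y'', hy'', hp⟩ := bperpX x hxX
  have hne1 : y ≠ y' := fun h => D.not_opposite x y hex (h ▸ he')
  have hne2 : y ≠ y'' := fun h => hp (Or.inl (h ▸ hex))
  obtain ⟨α, hα, k₁, k₂⟩ := D.pairY hhom hy hy' hy'' hne1 hne2
  have hs : D.E (α x) y := by
    have := (hα.2.2 x y).mp hex
    rwa [k₁] at this
  have hfix : α x = x := huniq y hy (α x) x hs hex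
  have : D.E y'' x := by
    have := (hα.2.2 y' x).mp he'
    rwa [k₂, hfix] at this
  exact hp (Or.inr this)

lemma base002 (D : TwoPartiteDigraph V) (hhom : D.Homogeneous) (hYne : D.Y.Nonempty)
    (bplusX : ∀ x ∈ D.X, ∃ y ∈ D.Y, D.E x y)
    (bminusX : ∀ x ∈ D.X, ∃ y ∈ D.Y, D.E y x)
    (bperpY : ∀ y ∈ D.Y, ∃ x ∈ D.X, ¬ D.Adj y x) :
    ∃ y ∈ D.Y, ∃ x₁ ∈ D.X, ∃ x₂ ∈ D.X, x₁ ≠ x₂ ∧ ¬ D.Adj y x₁ ∧ ¬ D.Adj y x₂ := by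
  by_contra hcon
  push_neg at hcon
  have huniq : ∀ y ∈ D.Y, ∀ x₁ ∈ D.X, ∀ x₂ ∈ D.X, ¬ D.Adj y x₁ → ¬ D.Adj y x₂ → x₁ = x₂ := by
    intro y hy x₁ hx₁ x₂ hx₂ e₁ e₂
    by_contra hne
    exact e₂ (hcon y hy x₁ hx₁ x₂ hx₂ hne e₁)
  obtain ⟨y, hy⟩ := hYne
  obtain ⟨x, hxX, hex⟩ := bperpY y hy
  obtain ⟨y', hy', he'⟩ := bplusX x hxX
  obtain ⟨y'', hy'', he''⟩ := bminusX x hxX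
  have hne1 : y ≠ y' := fun h => hex (Or.inr (h ▸ he'))
  have hne2 : y ≠ y'' := fun h => hex (Or.inl (h ▸ he''))
  obtain ⟨α, hα, k₁, k₂⟩ := D.pairY hhom hy hy' hy'' hne1 hne2
  have hs : ¬ D.Adj y (α x) := by
    intro h
    apply hex
    have := (hα.adj_iff y x).mpr
    rw [k₁] at this
    exact this h
  have hfix : α x = x := huniq y hy (α x) ((hα.1 x).mp hxX) x hxX hs hex
  have : D.E x y'' := by
    have := (hα.2.2 x y').mp he'
    rwa [k₂, hfix] at this
  exact D.not_opposite y'' x he'' this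

end BaseI

section MasterI
variable {V : Type*}

/-- Master lemma, incomplete case: all three-part patterns over `X` are realized in `Y`. -/
lemma genI (D : TwoPartiteDigraph V) (hhom : D.Homogeneous) (hYne : D.Y.Nonempty)
    (bplusX : ∀ x ∈ D.X, ∃ y ∈ D.Y, D.E x y)
    (bminusX : ∀ x ∈ D.X, ∃ y ∈ D.Y, D.E y x)
    (bperpX : ∀ x ∈ D.X, ∃ y ∈ D.Y, ¬ D.Adj x y)
    (bplusY : ∀ y ∈ D.Y, ∃ x ∈ D.X, D.E y x)
    (bminusY : ∀ y ∈ D.Y, ∃ x ∈ D.X, D.E x y)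
    (bperpY : ∀ y ∈ D.Y, ∃ x ∈ D.X, ¬ D.Adj y x) :
    ∀ n, ∀ A B C : Set V, A.Finite → B.Finite → C.Finite →
      A ⊆ D.X → B ⊆ D.X → C ⊆ D.X →
      Disjoint A B → Disjoint A C → Disjoint B C →
      A.ncard + B.ncard + C.ncard ≤ n →
      ∃ y ∈ D.Y, (∀ a ∈ A, D.E y a) ∧ (∀ b ∈ B, D.E b y) ∧ (∀ c ∈ C, ¬ D.Adj y c) := by
  intro n
  induction n with
  | zero =>
    intro A B C hA hB hC hAX hBX hCX hAB hAC hBC hle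
    obtain ⟨y, hy⟩ := hYne
    have hA0 : A = ∅ := (Set.ncard_eq_zero hA).mp (by omega)
    have hB0 : B = ∅ := (Set.ncard_eq_zero hB).mp (by omega)
    have hC0 : C = ∅ := (Set.ncard_eq_zero hC).mp (by omega)
    subst hA0 hB0 hC0
    exact ⟨y, hy, by simp, by simp, by simp⟩
  | succ n ih =>
    intro A B C hA hB hC hAX hBX hCX hAB hAC hBC hle
    by_cases hle' : A.ncard + B.ncard + C.ncard ≤ n
    · exact ih A B C hA hB hC hAX hBX hCX hAB hAC hBC hle'
    push_neg at hle'
    have hsum : A.ncard + B.ncard + C.ncard = n + 1 := le_antisymm hle hle'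
    by_cases hi : 1 ≤ A.ncard
    · by_cases hjc : 1 ≤ B.ncard + C.ncard
      · -- mixed case with a `+` point
        by_contra hcon
        have hno : ∀ A' B' C' : Set V, A'.Finite → B'.Finite → C'.Finite →
            A' ⊆ D.X → B' ⊆ D.X → C' ⊆ D.X →
            Disjoint A' B' → Disjoint A' C' → Disjoint B' C' →
            A'.ncard = A.ncard → B'.ncard = B.ncard → C'.ncard = C.ncard →
            ¬ ∃ y ∈ D.Y, (∀ a ∈ A', D.E y a) ∧ (∀ b ∈ B', D.E b y) ∧
              (∀ c ∈ C', ¬ D.Adj y c) := by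
          rintro A' B' C' hf1 hf2 hf3 hs1 hs2 hs3 hd1 hd2 hd3 hc1 hc2 hc3 hreal
          exact hcon (D.transfer hhom hf1 hf2 hf3 hA hB hC hs1 hs2 hs3 hAX hBX hCX
            hd1 hd2 hd3 hAB hAC hBC hc1 hc2 hc3 hreal)
        obtain ⟨a, ha⟩ : A.Nonempty := Set.nonempty_of_ncard_ne_zero (by omega)
        have hc1 : (A \ {a}).ncard + 1 = A.ncard := Set.ncard_diff_singleton_add_one ha hA
        obtain ⟨y₁, hy₁, h1p, h1m, h1c⟩ := ih (A \ {a}) B C (hA.diff) hB hC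
          (Set.diff_subset.trans hAX) hBX hCX (hAB.mono_left Set.diff_subset)
          (hAC.mono_left Set.diff_subset) hBC (by omega)
        have hN1 : {x | D.E y₁ x} ⊆ A \ {a} := by
          intro x hx
          by_contra hxT
          have hxX : x ∈ D.X := D.memX_of_edge_from hy₁ hx
          by_cases hxa : x ∈ A
          · have hxa' : x = a := by
              by_contra hne
              exact hxT ⟨hxa, by simpa using hne⟩
            subst hxa'
            refine hcon ⟨y₁, hy₁, ?_, h1m, h1c⟩
            intro a' ha'
            by_cases h' : a' = x
            · exact h' ▸ hx
            · exact h1p a' ⟨ha', by simpa using h'⟩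
          · by_cases hxb : x ∈ B
            · exact D.not_opposite y₁ x hx (h1m x hxb)
            · by_cases hxc : x ∈ C
              · exact h1c x hxc (Or.inl hx)
              · refine hno (insert x (A \ {a})) B C ((hA.diff).insert x) hB hC
                  (Set.insert_subset hxX (Set.diff_subset.trans hAX)) hBX hCX
                  (Set.disjoint_left.mpr ?_) (Set.disjoint_left.mpr ?_) hBC
                  (by rw [Set.ncard_insert_of_notMem (fun h => hxT h) (hA.diff)]; omega)
                  rfl rfl ⟨y₁, hy₁, ?_, h1m, h1c⟩
                · rintro z (rfl | hz)
                  · exact hxb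
                  · exact Set.disjoint_left.mp hAB hz.1
                · rintro z (rfl | hz)
                  · exact hxc
                  · exact Set.disjoint_left.mp hAC hz.1
                · rintro a' (rfl | ha')
                  · exact hx
                  · exact h1p a' ha'
        by_cases hj : 1 ≤ B.ncard
        · obtain ⟨b, hb⟩ : B.Nonempty := Set.nonempty_of_ncard_ne_zero (by omega)
          have hc2 : (B \ {b}).ncard + 1 = B.ncard := Set.ncard_diff_singleton_add_one hb hB
          obtain ⟨y₂, hy₂, h2p, _, _⟩ := ih A (B \ {b}) C hA (hB.diff) hC hAX
            (Set.diff_subset.trans hBX) hCX (hAB.mono_right Set.diff_subset) hAC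
            (hBC.mono_left Set.diff_subset) (by omega)
          exact D.Rset_clash hhom D.E (fun α hα v w => hα.2.2 v w) hy₁ hy₂ (hA.diff)
            hN1 (fun x hx => h2p x hx) (by omega)
        · have hcge : 1 ≤ C.ncard := by omega
          obtain ⟨cc, hcc⟩ : C.Nonempty := Set.nonempty_of_ncard_ne_zero (by omega)
          have hc2 : (C \ {cc}).ncard + 1 = C.ncard :=
            Set.ncard_diff_singleton_add_one hcc hC
          obtain ⟨y₂, hy₂, h2p, _, _⟩ := ih A B (C \ {cc}) hA hB (hC.diff) hAX hBX
            (Set.diff_subset.trans hCX) hAB (hAC.mono_right Set.diff_subset)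
            (hBC.mono_right Set.diff_subset) (by omega)
          exact D.Rset_clash hhom D.E (fun α hα v w => hα.2.2 v w) hy₁ hy₂ (hA.diff)
            hN1 (fun x hx => h2p x hx) (by omega)
      · -- B = C = ∅, pure `+` case
        have hB0 : B = ∅ := (Set.ncard_eq_zero hB).mp (by omega)
        have hC0 : C = ∅ := (Set.ncard_eq_zero hC).mp (by omega)
        subst hB0 hC0
        have hAc : A.ncard = n + 1 := by simpa using hsum
        by_cases hn0 : n = 0
        · subst hn0
          obtain ⟨a, rfl⟩ := Set.ncard_eq_one.mp (by omega : A.ncard = 1)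
          obtain ⟨y, hy, he⟩ := bminusX a (hAX rfl)
          refine ⟨y, hy, ?_, by simp, by simp⟩
          rintro a' rfl
          exact he
        by_cases hn1 : n = 1
        · subst hn1
          obtain ⟨yq, hyq, x₁, hx₁, x₂, hx₂, hne, he₁, he₂⟩ :=
            D.base200 hhom hYne bplusX bplusY bperpX
          have htr := D.transfer hhom (A := {x₁, x₂}) (B := ∅) (C := ∅) (A' := A)
            (B' := ∅) (C' := ∅) ((Set.finite_singleton x₂).insert x₁)
            Set.finite_empty Set.finite_empty hA Set.finite_empty Set.finite_empty
            (by rintro z (rfl | rfl) <;> assumption) (Set.empty_subset _)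
            (Set.empty_subset _) hAX (Set.empty_subset _) (Set.empty_subset _)
            (Set.disjoint_empty _) (Set.disjoint_empty _) (Set.disjoint_empty _)
            (Set.disjoint_empty _) (Set.disjoint_empty _) (Set.disjoint_empty _)
            (by rw [Set.ncard_pair hne, hAc]) rfl rfl
            ⟨yq, hyq, by rintro z (rfl | rfl) <;> assumption,
              fun b hb => absurd hb (Set.notMem_empty b),
              fun c hc => absurd hc (Set.notMem_empty c)⟩
          obtain ⟨y', hy', k1, _, _⟩ := htr
          exact ⟨y', hy', k1, by simp, by simp⟩
        · have hn : 2 ≤ n := by omega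
          have hIH' : ∀ T : Set V, T.Finite → T ⊆ D.X → T.ncard ≤ n →
              ∃ y ∈ D.Y, ∀ t ∈ T, D.E y t := by
            intro T hTf hTX hTc
            obtain ⟨y, hy, h1, _, _⟩ := ih T ∅ ∅ hTf Set.finite_empty Set.finite_empty hTX
              (Set.empty_subset _) (Set.empty_subset _) (Set.disjoint_empty _)
              (Set.disjoint_empty _) (Set.disjoint_empty _) (by simpa using hTc)
            exact ⟨y, hy, h1⟩
          obtain ⟨y, hy, h1⟩ := D.LpureI hhom bminusY bperpY hn hIH' hA hAX hAc
          exact ⟨y, hy, h1, by simp, by simp⟩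
    · -- A = ∅
      have hA0 : A = ∅ := (Set.ncard_eq_zero hA).mp (by omega)
      subst hA0
      by_cases hj : 1 ≤ B.ncard
      · by_cases hc : 1 ≤ C.ncard
        · -- mixed `-`/`⊥` case
          by_contra hcon
          have hno : ∀ B' C' : Set V, B'.Finite → C'.Finite → B' ⊆ D.X → C' ⊆ D.X →
              Disjoint B' C' → B'.ncard = B.ncard → C'.ncard = C.ncard →
              ¬ ∃ y ∈ D.Y, (∀ b ∈ B', D.E b y) ∧ (∀ c ∈ C', ¬ D.Adj y c) := by
            rintro B' C' hf2 hf3 hs2 hs3 hd3 hc2 hc3 ⟨y, hy, g2, g3⟩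
            refine hcon (D.transfer hhom Set.finite_empty hf2 hf3 Set.finite_empty hB hC
              (Set.empty_subset _) hs2 hs3 (Set.empty_subset _) hBX hCX
              ((Set.disjoint_empty _).symm) ((Set.disjoint_empty _).symm) hd3
              ((Set.disjoint_empty _).symm) ((Set.disjoint_empty _).symm) hBC
              rfl hc2 hc3 ⟨y, hy, fun a ha => absurd ha (Set.notMem_empty a), g2, g3⟩)
          obtain ⟨b, hb⟩ : B.Nonempty := Set.nonempty_of_ncard_ne_zero (by omega)
          have hc1 : (B \ {b}).ncard + 1 = B.ncard := Set.ncard_diff_singleton_add_one hb hB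
          obtain ⟨y₁, hy₁, _, h1m, h1c⟩ := ih ∅ (B \ {b}) C Set.finite_empty (hB.diff) hC
            (Set.empty_subset _) (Set.diff_subset.trans hBX) hCX
            ((Set.disjoint_empty _).symm) ((Set.disjoint_empty _).symm)
            (hBC.mono_left Set.diff_subset) (by omega)
          have hN1 : {x | D.E x y₁} ⊆ B \ {b} := by
            intro x hx
            by_contra hxT
            have hxX : x ∈ D.X := D.memX_of_edge_to hy₁ hx
            by_cases hxb : x ∈ B
            · have hxb' : x = b := by
                by_contra hne
                exact hxT ⟨hxb, by simpa using hne⟩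
              subst hxb'
              refine hcon ⟨y₁, hy₁, by simp, ?_, h1c⟩
              intro b' hb'
              by_cases h' : b' = x
              · exact h' ▸ hx
              · exact h1m b' ⟨hb', by simpa using h'⟩
            · by_cases hxc : x ∈ C
              · exact h1c x hxc (Or.inr hx)
              · refine hno (insert x (B \ {b})) C ((hB.diff).insert x) hC
                  (Set.insert_subset hxX (Set.diff_subset.trans hBX)) hCX
                  (Set.disjoint_left.mpr ?_)
                  (by rw [Set.ncard_insert_of_notMem (fun h => hxT h) (hB.diff)]; omega)
                  rfl ⟨y₁, hy₁, ?_, h1c⟩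
                · rintro z (rfl | hz)
                  · exact hxc
                  · exact Set.disjoint_left.mp hBC hz.1
                · rintro b' (rfl | hb')
                  · exact hx
                  · exact h1m b' hb'
          obtain ⟨cc, hcc⟩ : C.Nonempty := Set.nonempty_of_ncard_ne_zero (by omega)
          have hc2 : (C \ {cc}).ncard + 1 = C.ncard :=
            Set.ncard_diff_singleton_add_one hcc hC
          obtain ⟨y₂, hy₂, _, h2m, _⟩ := ih ∅ B (C \ {cc}) Set.finite_empty hB (hC.diff)
            (Set.empty_subset _) hBX (Set.diff_subset.trans hCX)
            ((Set.disjoint_empty _).symm) ((Set.disjoint_empty _).symm)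
            (hBC.mono_right Set.diff_subset) (by omega)
          exact D.Rset_clash hhom (fun y x => D.E x y) (fun α hα v w => hα.2.2 w v)
            hy₁ hy₂ (hB.diff) hN1 (fun x hx => h2m x hx) (by omega)
        · -- C = ∅, pure `-` case
          have hC0 : C = ∅ := (Set.ncard_eq_zero hC).mp (by omega)
          subst hC0
          have hBc : B.ncard = n + 1 := by simpa using hsum
          by_cases hn0 : n = 0
          · subst hn0
            obtain ⟨b, rfl⟩ := Set.ncard_eq_one.mp (by omega : B.ncard = 1)
            obtain ⟨y, hy, he⟩ := bplusX b (hBX rfl)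
            refine ⟨y, hy, by simp, ?_, by simp⟩
            rintro b' rfl
            exact he
          by_cases hn1 : n = 1
          · subst hn1
            obtain ⟨yq, hyq, x₁, hx₁, x₂, hx₂, hne, he₁, he₂⟩ :=
              D.base020 hhom hYne bminusX bminusY bperpX
            have htr := D.transfer hhom (A := ∅) (B := {x₁, x₂}) (C := ∅) (A' := ∅)
              (B' := B) (C' := ∅) Set.finite_empty
              ((Set.finite_singleton x₂).insert x₁) Set.finite_empty
              Set.finite_empty hB Set.finite_empty
              (Set.empty_subset _) (by rintro z (rfl | rfl) <;> assumption)
              (Set.empty_subset _) (Set.empty_subset _) hBX (Set.empty_subset _)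
              ((Set.disjoint_empty _).symm) (Set.disjoint_empty _) (Set.disjoint_empty _)
              ((Set.disjoint_empty _).symm) (Set.disjoint_empty _) (Set.disjoint_empty _)
              rfl (by rw [Set.ncard_pair hne, hBc]) rfl
              ⟨yq, hyq, fun a ha => absurd ha (Set.notMem_empty a),
                by rintro z (rfl | rfl) <;> assumption,
                fun c hc => absurd hc (Set.notMem_empty c)⟩
            obtain ⟨y', hy', _, k2, _⟩ := htr
            exact ⟨y', hy', by simp, k2, by simp⟩
          · have hn : 2 ≤ n := by omega
            have hIH' : ∀ T : Set V, T.Finite → T ⊆ D.rev.X → T.ncard ≤ n →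
                ∃ y ∈ D.rev.Y, ∀ t ∈ T, D.rev.E y t := by
              intro T hTf hTX hTc
              obtain ⟨y, hy, _, h2, _⟩ := ih ∅ T ∅ Set.finite_empty hTf Set.finite_empty
                (Set.empty_subset _) hTX (Set.empty_subset _)
                ((Set.disjoint_empty _).symm) (Set.disjoint_empty _) (Set.disjoint_empty _)
                (by simpa using hTc)
              exact ⟨y, hy, h2⟩
            have bminusY' : ∀ y ∈ D.rev.Y, ∃ x ∈ D.rev.X, D.rev.E x y := by
              intro y hy
              obtain ⟨x, hx, h⟩ := bplusY y hy
              exact ⟨x, hx, h⟩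
            have bperpY' : ∀ y ∈ D.rev.Y, ∃ x ∈ D.rev.X, ¬ D.rev.Adj y x := by
              intro y hy
              obtain ⟨x, hx, h⟩ := bperpY y hy
              exact ⟨x, hx, fun hadj => h ((D.rev_adj y x).mp hadj)⟩
            obtain ⟨y, hy, h1⟩ := D.rev.LpureI (homogeneous_rev hhom) bminusY' bperpY' hn
              hIH' hB hBX hBc
            exact ⟨y, hy, by simp, h1, by simp⟩
      · -- B = ∅
        have hB0 : B = ∅ := (Set.ncard_eq_zero hB).mp (by omega)
        subst hB0
        have hCc : C.ncard = n + 1 := by simpa using hsum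
        by_cases hn0 : n = 0
        · subst hn0
          obtain ⟨c, rfl⟩ := Set.ncard_eq_one.mp (by omega : C.ncard = 1)
          obtain ⟨y, hy, he⟩ := bperpX c (hCX rfl)
          refine ⟨y, hy, by simp, by simp, ?_⟩
          rintro c' rfl
          exact fun h => he (D.adj_comm.mp h)
        by_cases hn1 : n = 1
        · subst hn1
          obtain ⟨yq, hyq, x₁, hx₁, x₂, hx₂, hne, he₁, he₂⟩ :=
            D.base002 hhom hYne bplusX bminusX bperpY
          have htr := D.transfer hhom (A := ∅) (B := ∅) (C := {x₁, x₂}) (A' := ∅)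
            (B' := ∅) (C' := C) Set.finite_empty Set.finite_empty
            ((Set.finite_singleton x₂).insert x₁)
            Set.finite_empty Set.finite_empty hC
            (Set.empty_subset _) (Set.empty_subset _)
            (by rintro z (rfl | rfl) <;> assumption)
            (Set.empty_subset _) (Set.empty_subset _) hCX
            (Set.disjoint_empty _) ((Set.disjoint_empty _).symm) ((Set.disjoint_empty _).symm)
            (Set.disjoint_empty _) ((Set.disjoint_empty _).symm) ((Set.disjoint_empty _).symm)
            rfl rfl (by rw [Set.ncard_pair hne, hCc])
            ⟨yq, hyq, fun a ha => absurd ha (Set.notMem_empty a),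
              fun b hb => absurd hb (Set.notMem_empty b),
              by rintro z (rfl | rfl) <;> assumption⟩
          obtain ⟨y', hy', _, _, k3⟩ := htr
          exact ⟨y', hy', by simp, by simp, k3⟩
        · have hn : 2 ≤ n := by omega
          have hIH' : ∀ T : Set V, T.Finite → T ⊆ D.X → T.ncard ≤ n →
              ∃ y ∈ D.Y, ∀ t ∈ T, ¬ D.Adj y t := by
            intro T hTf hTX hTc
            obtain ⟨y, hy, _, _, h3⟩ := ih ∅ ∅ T Set.finite_empty Set.finite_empty hTf
              (Set.empty_subset _) (Set.empty_subset _) hTX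
              (Set.disjoint_empty _) ((Set.disjoint_empty _).symm)
              ((Set.disjoint_empty _).symm) (by simpa using hTc)
            exact ⟨y, hy, h3⟩
          obtain ⟨y, hy, h1⟩ := D.LperpI hhom bplusY bminusY hn hIH' hC hCX hCc
          exact ⟨y, hy, by simp, by simp, h1⟩

end MasterI

section Mcases
variable {V : Type*}

/-- If no vertex of `X` has two out-neighbours, `D` is the matching digraph. -/
lemma Mcase (D : TwoPartiteDigraph V) (hhom : D.Homogeneous) (hcomp : D.CompleteBip)
    (hXne : D.X.Nonempty)
    (bplusX : ∀ x ∈ D.X, ∃ y ∈ D.Y, D.E x y)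
    (bplusY : ∀ y ∈ D.Y, ∃ x ∈ D.X, D.E y x)
    (bminusY : ∀ y ∈ D.Y, ∃ x ∈ D.X, D.E x y)
    (hnotP : ¬ ∃ x ∈ D.X, ∃ y₁ ∈ D.Y, ∃ y₂ ∈ D.Y, y₁ ≠ y₂ ∧ D.E x y₁ ∧ D.E x y₂) :
    D.IsM ∧ 2 ≤ Cardinal.mk D.X := by
  classical
  have hm : ∀ x : V, ∃ y, x ∈ D.X → (y ∈ D.Y ∧ D.E x y) := by
    intro x
    by_cases hx : x ∈ D.X
    · obtain ⟨y, hy, he⟩ := bplusX x hx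
      exact ⟨y, fun _ => ⟨hy, he⟩⟩
    · exact ⟨x, fun h => absurd h hx⟩
  choose m hmspec using hm
  have hmY : ∀ x ∈ D.X, m x ∈ D.Y := fun x hx => (hmspec x hx).1
  have hmE : ∀ x ∈ D.X, D.E x (m x) := fun x hx => (hmspec x hx).2
  have hu : ∀ x ∈ D.X, ∀ y, D.E x y → y = m x := by
    intro x hx y he
    by_contra hne
    exact hnotP ⟨x, hx, y, D.memY_of_edge_from hx he, m x, hmY x hx, hne, he, hmE x hx⟩
  have hinj : Set.InjOn m D.X := by
    intro x₁ hx₁ x₂ hx₂ heq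
    by_contra hne
    obtain ⟨xo, hxo, heo⟩ := bplusY (m x₁) (hmY x₁ hx₁)
    have hne3 : m xo ≠ m x₁ := by
      intro h
      exact D.not_opposite xo (m xo) (hmE xo hxo) (h ▸ heo)
    have h13 : x₁ ≠ xo := fun h => hne3 (by rw [← h])
    have h23 : x₂ ≠ xo := fun h => hne3 (by rw [← h, ← heq])
    obtain ⟨α, hα, k₁, k₂⟩ := D.pairX hhom hx₁ hx₂ hxo hne h13
    have hs : D.E x₁ (α (m x₁)) := by
      have := (hα.2.2 x₁ (m x₁)).mp (hmE x₁ hx₁)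
      rwa [k₁] at this
    have hfix : α (m x₁) = m x₁ := hu x₁ hx₁ _ hs
    have hs2 : D.E xo (m x₁) := by
      have := (hα.2.2 x₂ (m x₂)).mp (hmE x₂ hx₂)
      rwa [k₂, ← heq, hfix] at this
    exact hne3 ((hu xo hxo (m x₁) hs2).symm)
  have hbij : Set.BijOn m D.X D.Y := by
    refine ⟨hmY, hinj, ?_⟩
    intro y hy
    obtain ⟨x, hx, he⟩ := bminusY y hy
    exact ⟨x, hx, (hu x hx y he).symm⟩
  constructor
  · refine ⟨m, hbij, Or.inl ?_⟩
    intro x hx y hy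
    constructor
    · constructor
      · intro he
        exact hu x hx y he
      · rintro rfl
        exact hmE x hx
    · constructor
      · intro he heq
        exact D.not_opposite x (m x) (hmE x hx) (heq ▸ he)
      · intro hne
        have hnxy : ¬ D.E x y := fun h => hne (hu x hx y h)
        rcases hcomp x hx y hy with h | h
        · exact absurd h hnxy
        · exact h
  · obtain ⟨x, hx⟩ := hXne
    obtain ⟨xo, hxo, heo⟩ := bplusY (m x) (hmY x hx)
    have hne : x ≠ xo := fun h => D.not_opposite x (m x) (hmE x hx) (h ▸ heo)
    rw [Cardinal.two_le_iff]
    exact ⟨⟨x, hx⟩, ⟨xo, hxo⟩, fun h => hne (congrArg Subtype.val h)⟩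

/-- If no vertex of `Y` has two out-neighbours, `D` is the reversed matching digraph. -/
lemma M'case (D : TwoPartiteDigraph V) (hhom : D.Homogeneous) (hcomp : D.CompleteBip)
    (hYne : D.Y.Nonempty)
    (bplusX : ∀ x ∈ D.X, ∃ y ∈ D.Y, D.E x y)
    (bminusX : ∀ x ∈ D.X, ∃ y ∈ D.Y, D.E y x)
    (bplusY : ∀ y ∈ D.Y, ∃ x ∈ D.X, D.E y x)
    (hnotQ : ¬ ∃ y ∈ D.Y, ∃ x₁ ∈ D.X, ∃ x₂ ∈ D.X, x₁ ≠ x₂ ∧ D.E y x₁ ∧ D.E y x₂) :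
    D.IsM ∧ 2 ≤ Cardinal.mk D.X := by
  classical
  have hm' : ∀ y : V, ∃ x, y ∈ D.Y → (x ∈ D.X ∧ D.E y x) := by
    intro y
    by_cases hy : y ∈ D.Y
    · obtain ⟨x, hx, he⟩ := bplusY y hy
      exact ⟨x, fun _ => ⟨hx, he⟩⟩
    · exact ⟨y, fun h => absurd h hy⟩
  choose m' hm'spec using hm'
  have hm'X : ∀ y ∈ D.Y, m' y ∈ D.X := fun y hy => (hm'spec y hy).1
  have hm'E : ∀ y ∈ D.Y, D.E y (m' y) := fun y hy => (hm'spec y hy).2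
  have hu' : ∀ y ∈ D.Y, ∀ x, D.E y x → x = m' y := by
    intro y hy x he
    by_contra hne
    exact hnotQ ⟨y, hy, x, D.memX_of_edge_from hy he, m' y, hm'X y hy, hne, he, hm'E y hy⟩
  have hinj' : Set.InjOn m' D.Y := by
    intro y₁ hy₁ y₂ hy₂ heq
    by_contra hne
    obtain ⟨y₃, hy₃, he₃⟩ := bplusX (m' y₁) (hm'X y₁ hy₁)
    have hne3 : m' y₃ ≠ m' y₁ := by
      intro h
      exact D.not_opposite y₃ (m' y₃) (hm'E y₃ hy₃) (h ▸ he₃)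
    have h13 : y₁ ≠ y₃ := fun h => hne3 (by rw [← h])
    obtain ⟨α, hα, k₁, k₂⟩ := D.pairY hhom hy₁ hy₂ hy₃ hne h13
    have hs : D.E y₁ (α (m' y₁)) := by
      have := (hα.2.2 y₁ (m' y₁)).mp (hm'E y₁ hy₁)
      rwa [k₁] at this
    have hfix : α (m' y₁) = m' y₁ := hu' y₁ hy₁ _ hs
    have hs2 : D.E y₃ (m' y₁) := by
      have := (hα.2.2 y₂ (m' y₂)).mp (hm'E y₂ hy₂)
      rwa [k₂, ← heq, hfix] at this
    exact hne3 ((hu' y₃ hy₃ (m' y₁) hs2).symm)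
  have hm2 : ∀ x : V, ∃ y, x ∈ D.X → (y ∈ D.Y ∧ D.E y x) := by
    intro x
    by_cases hx : x ∈ D.X
    · obtain ⟨y, hy, he⟩ := bminusX x hx
      exact ⟨y, fun _ => ⟨hy, he⟩⟩
    · exact ⟨x, fun h => absurd h hx⟩
  choose m hmspec using hm2
  have hmY : ∀ x ∈ D.X, m x ∈ D.Y := fun x hx => (hmspec x hx).1
  have hmE : ∀ x ∈ D.X, D.E (m x) x := fun x hx => (hmspec x hx).2
  have hu2 : ∀ x ∈ D.X, ∀ y ∈ D.Y, D.E y x → y = m x := by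
    intro x hx y hy he
    have h1 : x = m' y := hu' y hy x he
    have h2 : x = m' (m x) := hu' (m x) (hmY x hx) x (hmE x hx)
    exact hinj' hy (hmY x hx) (h1 ▸ h2)
  have hbij : Set.BijOn m D.X D.Y := by
    refine ⟨hmY, ?_, ?_⟩
    · intro x₁ hx₁ x₂ hx₂ heq
      have h1 : x₁ = m' (m x₁) := hu' (m x₁) (hmY x₁ hx₁) x₁ (hmE x₁ hx₁)
      have h2 : x₂ = m' (m x₂) := hu' (m x₂) (hmY x₂ hx₂) x₂ (hmE x₂ hx₂)
      rw [h1, h2, heq]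
    · intro y hy
      refine ⟨m' y, hm'X y hy, ?_⟩
      exact (hu2 (m' y) (hm'X y hy) y hy (hm'E y hy)).symm
  constructor
  · refine ⟨m, hbij, Or.inr ?_⟩
    intro x hx y hy
    constructor
    · constructor
      · intro he
        exact hu2 x hx y hy he
      · rintro rfl
        exact hmE x hx
    · constructor
      · intro he heq
        exact D.not_opposite (m x) x (hmE x hx) (heq ▸ he)
      · intro hne
        have hnyx : ¬ D.E y x := fun h => hne (hu2 x hx y hy h)
        rcases hcomp x hx y hy with h | h
        · exact h
        · exact absurd h hnyx
  · obtain ⟨y, hy⟩ := hYne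
    have hx1 : m' y ∈ D.X := hm'X y hy
    obtain ⟨y', hy', he'⟩ := bplusX (m' y) hx1
    have hx2 : m' y' ∈ D.X := hm'X y' hy'
    have hne : m' y ≠ m' y' := by
      intro h
      exact D.not_opposite y' (m' y') (hm'E y' hy') (by rw [← h]; exact he')
    rw [Cardinal.two_le_iff]
    exact ⟨⟨m' y, hx1⟩, ⟨m' y', hx2⟩, fun h => hne (congrArg Subtype.val h)⟩

end Mcases
end Pure

end TwoPartiteDigraph


/-- Every homogeneous non-bipartite 2-partite digraph is isomorphic to `M_κ` for some
cardinal `κ ≥ 2`, or is a generic 2-partite digraph, or is a generic orientation of a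
generic bipartite graph. -/
theorem stmt_16 {V : Type*} (D : TwoPartiteDigraph V) (hhom : D.Homogeneous)
    (hnb : ¬ D.Bipartite) :
    (D.IsM ∧ 2 ≤ Cardinal.mk D.X) ∨ D.IsGeneric ∨ D.IsGenericOrientation := by
  classical
  have hnb2 : ¬ ((∀ u v, D.E u v → u ∈ D.X) ∨ (∀ u v, D.E u v → u ∈ D.Y)) := hnb
  obtain ⟨h1, h2⟩ := not_or.mp hnb2
  push_neg at h1 h2
  obtain ⟨u₁, v₁, he₁, hu₁⟩ := h1
  obtain ⟨u₂, v₂, he₂, hu₂⟩ := h2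
  have hu₁Y : u₁ ∈ D.Y := (D.mem_or u₁).resolve_left hu₁
  have hv₁X : v₁ ∈ D.X := D.memX_of_edge_from hu₁Y he₁
  have hu₂X : u₂ ∈ D.X := (D.mem_or u₂).resolve_right hu₂
  have hv₂Y : v₂ ∈ D.Y := D.memY_of_edge_from hu₂X he₂
  have bplusX := D.transport_plusX hhom hu₂X hv₂Y he₂
  have bminusX := D.transport_minusX hhom hv₁X hu₁Y he₁
  have bplusY := D.transport_plusY hhom hv₁X hu₁Y he₁
  have bminusY := D.transport_minusY hhom hu₂X hv₂Y he₂
  have hYne : D.Y.Nonempty := ⟨u₁, hu₁Y⟩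
  have hXne : D.X.Nonempty := ⟨u₂, hu₂X⟩
  by_cases hcomp : D.CompleteBip
  · by_cases hP : ∃ x ∈ D.X, ∃ y₁ ∈ D.Y, ∃ y₂ ∈ D.Y, y₁ ≠ y₂ ∧ D.E x y₁ ∧ D.E x y₂
    · by_cases hQ : ∃ y ∈ D.Y, ∃ x₁ ∈ D.X, ∃ x₂ ∈ D.X, x₁ ≠ x₂ ∧ D.E y x₁ ∧ D.E y x₂
      · -- generic case
        right; left
        refine ⟨hcomp, ?_⟩
        intro AX BX hAXf hBXf hAXs hBXs hABX AY BY hAYf hBYf hAYs hBYs hABY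
        constructor
        · obtain ⟨y, hy, k1, k2⟩ := D.genC hhom hcomp hYne bplusX bminusX bplusY bminusY
            hP hQ (AX.ncard + BX.ncard) AX BX hAXf hBXf hAXs hBXs hABX le_rfl
          exact ⟨y, hy, fun a ha => k1 a ha, fun b hb => k2 b hb⟩
        · have hcompS : D.swap.CompleteBip := fun x hx y hy => D.adj_comm.mp (hcomp y hy x hx)
          obtain ⟨x, hx, k1, k2⟩ := D.swap.genC (homogeneous_swap hhom) hcompS hXne
            bplusY bminusY bplusX bminusX hQ hP (AY.ncard + BY.ncard) AY BY
            hAYf hBYf hAYs hBYs hABY le_rfl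
          exact ⟨x, hx, fun a ha => k1 a ha, fun b hb => k2 b hb⟩
      · -- matching, reversed
        left
        exact D.M'case hhom hcomp hYne bplusX bminusX bplusY hQ
    · -- matching
      left
      exact D.Mcase hhom hcomp hXne bplusX bplusY bminusY hP
  · -- incomplete case
    right; right
    have hncomp : ∃ x ∈ D.X, ∃ y ∈ D.Y, ¬ D.Adj x y := by
      by_contra h
      push_neg at h
      exact hcomp (fun x hx y hy => h x hx y hy)
    obtain ⟨x₀, hx₀, y₀, hy₀, hna⟩ := hncomp
    have bperpX := D.transport_perpX hhom hx₀ hy₀ hna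
    have bperpY := D.transport_perpY hhom hx₀ hy₀ (fun h => hna (D.adj_comm.mp h))
    intro AX BX CX hAXf hBXf hCXf hAXs hBXs hCXs hABX hACX hBCX
    intro AY BY CY hAYf hBYf hCYf hAYs hBYs hCYs hABY hACY hBCY
    constructor
    · obtain ⟨y, hy, k1, k2, k3⟩ := D.genI hhom hYne bplusX bminusX bperpX bplusY bminusY
        bperpY (AX.ncard + BX.ncard + CX.ncard) AX BX CX hAXf hBXf hCXf hAXs hBXs hCXs
        hABX hACX hBCX le_rfl
      refine ⟨y, hy, fun a ha => k1 a ha, fun b hb => k2 b hb, ?_⟩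
      intro c hc
      exact ⟨Or.inr ⟨hy, hCXs hc⟩, k3 c hc⟩
    · obtain ⟨x, hx, k1, k2, k3⟩ := D.swap.genI (homogeneous_swap hhom) hXne
        bplusY bminusY bperpY bplusX bminusX bperpX
        (AY.ncard + BY.ncard + CY.ncard) AY BY CY hAYf hBYf hCYf hAYs hBYs hCYs
        hABY hACY hBCY le_rfl
      refine ⟨x, hx, fun a ha => k1 a ha, fun b hb => k2 b hb, ?_⟩
      intro c hc
      exact ⟨Or.inl ⟨hx, hCYs hc⟩, k3 c hc⟩
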